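/- arXiv:1710.01947 — 2 statements merged into one kernel-verified Lean document; each statement's English description precedes it below -/
import Mathlib

section
/- For every integer n ≥ 0, the feedback vertex number of the Sierpiński triangle graph Ŝ_3^n equals (3^n + 1)/2, which is one third of its number of vertices: τ(Ŝ_3^n) = (3^n + 1)/2 = |V(Ŝ_3^n)|/3. -/
open SimpleGraph

/-- The Sierpinski graph `S_p^n` on vertex set `P^n`: two distinct vertices are adjacent
iff they can be written as `s i j^(d-1)` and `s j i^(d-1)`. -/
def sierpinski (p n : Nat) : SimpleGraph (Fin n → Fin p) :=
  SimpleGraph.fromRel (fun u v =>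
    ∃ t : Fin n, ∃ i j : Fin p, i ≠ j ∧
      (∀ k, k < t → u k = v k) ∧ u t = i ∧ v t = j ∧
      (∀ k, t < k → u k = j ∧ v k = i))

/-- `X` is a feedback vertex set of `G` if deleting it leaves an acyclic graph. -/
def IsFeedbackVertexSet {V : Type*} (G : SimpleGraph V) (X : Set V) : Prop :=
  (G.induce Xᶜ).IsAcyclic

/-- The feedback vertex number: the minimum cardinality of a feedback vertex set. -/
noncomputable def feedbackNumber {V : Type*} (G : SimpleGraph V) : Nat :=
  sInf {k | ∃ X : Finset V, X.card = k ∧ IsFeedbackVertexSet G ↑X}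

/-- The maximum number of vertices of an induced forest of `G`. -/
noncomputable def maxInducedForest {V : Type*} (G : SimpleGraph V) : Nat :=
  sSup {k | ∃ Y : Finset V, Y.card = k ∧ (G.induce (↑Y : Set V)).IsAcyclic}

/-- The non-clique edges of `S_p^(n+1)`: edges `{s i j^l, s j i^l}` with `l ≥ 1`,
i.e. adjacency witnessed at a position `t` with `t < n`. -/
def nonCliqueRel (p n : Nat) (u v : Fin (n+1) → Fin p) : Prop :=
  ∃ t : Fin (n+1), (t : Nat) < n ∧ ∃ i j : Fin p, i ≠ j ∧
    (∀ k, k < t → u k = v k) ∧ u t = i ∧ v t = j ∧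
    (∀ k, t < k → u k = j ∧ v k = i)

/-- The setoid identifying the two endpoints of every non-clique edge of `S_p^(n+1)`. -/
def triSetoid (p n : Nat) : Setoid (Fin (n+1) → Fin p) :=
  Relation.EqvGen.setoid (nonCliqueRel p n)

/-- The generalized Sierpinski triangle graph: the contraction of all
non-clique edges of `S_p^(n+1)`. -/
def sierpinskiTriangle (p n : Nat) : SimpleGraph (Quotient (triSetoid p n)) where
  Adj x y := x ≠ y ∧ ∃ u v : Fin (n+1) → Fin p,
    Quotient.mk (triSetoid p n) u = x ∧ Quotient.mk (triSetoid p n) v = y ∧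
    (sierpinski p (n+1)).Adj u v
  symm := by
    constructor
    rintro x y ⟨hxy, u, v, hu, hv, h⟩
    exact ⟨hxy.symm, v, u, hv, hu, h.symm⟩
  loopless := by
    constructor
    rintro x ⟨hxx, -⟩
    exact hxx rfl


section Aux

abbrev St (n : ℕ) := Fin (n+1) → Fin 3

abbrev V3 (n : ℕ) := Quotient (triSetoid 3 n)

def mkV {n : ℕ} (u : St n) : V3 n := Quotient.mk (triSetoid 3 n) u

lemma r_symm {n : ℕ} {u v : St n} (h : nonCliqueRel 3 n u v) : nonCliqueRel 3 n v u := by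
  obtain ⟨t, ht, i, j, hij, hlt, hut, hvt, hgt⟩ := h
  exact ⟨t, ht, j, i, hij.symm, fun k hk => (hlt k hk).symm, hvt, hut,
    fun k hk => ⟨(hgt k hk).2, (hgt k hk).1⟩⟩

lemma r_funct {n : ℕ} {u v w : St n} (h1 : nonCliqueRel 3 n u v)
    (h2 : nonCliqueRel 3 n u w) : v = w := by
  obtain ⟨t, ht, i, j, hij, hlt, hut, hvt, hgt⟩ := h1
  obtain ⟨t', ht', i', j', hij', hlt', hut', hvt', hgt'⟩ := h2
  have key : ∀ (s s' : Fin (n+1)) (b b' : Fin 3),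
      ((s' : ℕ) < n) → (u s' ≠ b') →
      (∀ k, s < k → u k = b) → (∀ k, s' < k → u k = b') → s < s' → False := by
    intro s s' b b' hs' hne hgb hgb' hss'
    have hk1 : s' < (⟨(s' : ℕ) + 1, by omega⟩ : Fin (n+1)) := by
      simp [Fin.lt_def]
    have h1 : u s' = b := hgb s' hss'
    have h2 : u ⟨(s' : ℕ) + 1, by omega⟩ = b' := hgb' _ hk1
    have h3 : u ⟨(s' : ℕ) + 1, by omega⟩ = b := hgb _ (lt_trans hss' hk1)
    exact hne (by rw [h1, ← h3, h2])
  have htt : t = t' := by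
    rcases lt_trichotomy t t' with h | h | h
    · exact ((key t t' j j' ht' (by rw [hut']; exact hij') (fun k hk => (hgt k hk).1)
        (fun k hk => (hgt' k hk).1) h)).elim
    · exact h
    · exact ((key t' t j' j ht (by rw [hut]; exact hij) (fun k hk => (hgt' k hk).1)
        (fun k hk => (hgt k hk).1) h)).elim
  subst htt
  have hk1 : t < (⟨(t : ℕ) + 1, by omega⟩ : Fin (n+1)) := by simp [Fin.lt_def]
  have hjj : j = j' := by
    have e1 := (hgt _ hk1).1
    have e2 := (hgt' _ hk1).1
    rw [← e1, e2]
  funext k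
  rcases lt_trichotomy k t with h | h | h
  · rw [← hlt k h, ← hlt' k h]
  · subst h; rw [hvt, hvt', hjj]
  · rw [(hgt k h).2, (hgt' k h).2, ← hut, ← hut']

lemma r_const {n : ℕ} {c : Fin 3} {v : St n} (h : nonCliqueRel 3 n (fun _ => c) v) :
    False := by
  obtain ⟨t, ht, i, j, hij, hlt, hut, hvt, hgt⟩ := h
  have hk1 : t < (⟨(t : ℕ) + 1, by omega⟩ : Fin (n+1)) := by simp [Fin.lt_def]
  have := (hgt _ hk1).1
  exact hij (by rw [← hut, this])

lemma eqvGen_iff {n : ℕ} {u v : St n} :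
    Relation.EqvGen (nonCliqueRel 3 n) u v ↔ u = v ∨ nonCliqueRel 3 n u v := by
  constructor
  · intro h
    induction h with
    | rel a b hab => exact Or.inr hab
    | refl a => exact Or.inl rfl
    | symm a b _ ih =>
        rcases ih with h | h
        · exact Or.inl h.symm
        · exact Or.inr (r_symm h)
    | trans a b c _ _ ih1 ih2 =>
        rcases ih1 with h1 | h1
        · rw [h1]; exact ih2
        · rcases ih2 with h2 | h2
          · rw [← h2]; exact Or.inr h1
          · exact Or.inl (r_funct (r_symm h1) h2)
  · rintro (rfl | h)
    · exact Relation.EqvGen.refl u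
    · exact Relation.EqvGen.rel u v h

lemma mkV_eq_iff {n : ℕ} {u v : St n} :
    mkV u = mkV v ↔ u = v ∨ nonCliqueRel 3 n u v := by
  rw [← eqvGen_iff]
  constructor
  · intro h
    exact Quotient.exact h
  · intro h
    exact Quotient.sound h

instance {n : ℕ} : DecidableRel (nonCliqueRel 3 n) := fun u v => by
  unfold nonCliqueRel; infer_instance

instance {n : ℕ} : DecidableEq (V3 n) := fun x y =>
  Quotient.recOnSubsingleton₂ x y fun u v =>
    decidable_of_iff (u = v ∨ nonCliqueRel 3 n u v) mkV_eq_iff.symm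

instance {n : ℕ} : Fintype (V3 n) :=
  Fintype.ofSurjective (Quotient.mk (triSetoid 3 n)) fun x => Quot.exists_rep x

end Aux


section Adj

def constS {n : ℕ} (c : Fin 3) : St n := fun _ => c

def cornerV (n : ℕ) (c : Fin 3) : V3 n := mkV (constS c)

lemma mkV_const_iff {n : ℕ} {c : Fin 3} {w : St n} :
    cornerV n c = mkV w ↔ w = constS c := by
  rw [cornerV, mkV_eq_iff]
  constructor
  · rintro (h | h)
    · exact h.symm
    · exact (r_const h).elim
  · intro h; exact Or.inl h.symm

lemma cornerV_inj {n : ℕ} {c c' : Fin 3} (h : cornerV n c = cornerV n c') : c = c' := by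
  have := mkV_const_iff.mp h
  have := congrFun this 0
  simpa [constS] using this.symm

lemma rel_struct {n : ℕ} {u v : St n} (hne : mkV u ≠ mkV v)
    (h : ∃ t : Fin (n+1), ∃ i j : Fin 3, i ≠ j ∧
      (∀ k, k < t → u k = v k) ∧ u t = i ∧ v t = j ∧
      (∀ k, t < k → u k = j ∧ v k = i)) :
    (∀ k, k ≠ Fin.last n → u k = v k) ∧ u (Fin.last n) ≠ v (Fin.last n) := by
  obtain ⟨t, i, j, hij, hlt, hut, hvt, hgt⟩ := h
  by_cases ht : (t : ℕ) < n
  · exact absurd (mkV_eq_iff.mpr (Or.inr ⟨t, ht, i, j, hij, hlt, hut, hvt, hgt⟩)) hne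
  · have ht' : t = Fin.last n := by
      have := t.isLt
      exact Fin.ext (by simp [Fin.last]; omega)
    subst ht'
    refine ⟨fun k hk => hlt k ?_, by rw [hut, hvt]; exact hij⟩
    have hk' : (k : ℕ) ≠ n := fun e => hk (Fin.ext (by simp [Fin.last, e]))
    have := k.isLt
    simp [Fin.lt_def, Fin.last]
    omega

lemma adj_iff {n : ℕ} {x y : V3 n} :
    (sierpinskiTriangle 3 n).Adj x y ↔ x ≠ y ∧ ∃ u v : St n, mkV u = x ∧ mkV v = y ∧
      (∀ k, k ≠ Fin.last n → u k = v k) ∧ u (Fin.last n) ≠ v (Fin.last n) := by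
  constructor
  · intro h
    obtain ⟨hne, u, v, hu, hv, hadj⟩ := h
    refine ⟨hne, u, v, hu, hv, ?_⟩
    rw [sierpinski, SimpleGraph.fromRel_adj] at hadj
    obtain ⟨huv, hrel | hrel⟩ := hadj
    · exact rel_struct (show mkV u ≠ mkV v from fun e => hne (hu ▸ hv ▸ e)) hrel
    · have := rel_struct (show mkV v ≠ mkV u from fun e => hne.symm (hv ▸ hu ▸ e)) hrel
      exact ⟨fun k hk => (this.1 k hk).symm, fun e => this.2 e.symm⟩
  · rintro ⟨hne, u, v, hu, hv, hpre, hlast⟩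
    refine ⟨hne, u, v, hu, hv, ?_⟩
    rw [sierpinski, SimpleGraph.fromRel_adj]
    refine ⟨fun e => hlast (by rw [e]), Or.inl ⟨Fin.last n, u (Fin.last n), v (Fin.last n),
      hlast, fun k hk => hpre k (ne_of_lt hk), rfl, rfl,
      fun k hk => absurd hk (not_lt.2 (Fin.le_last k))⟩⟩

end Adj


section Cons

def consS {n : ℕ} (d : Fin 3) (u : St n) : St (n+1) := Fin.cons d u

@[simp] lemma consS_zero {n : ℕ} (d : Fin 3) (u : St n) : consS d u 0 = d := rfl

@[simp] lemma consS_succ {n : ℕ} (d : Fin 3) (u : St n) (k : Fin (n+1)) :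
    consS d u k.succ = u k := by simp [consS]

lemma consS_last {n : ℕ} (d : Fin 3) (u : St n) :
    consS d u (Fin.last (n+1)) = u (Fin.last n) := by
  rw [← Fin.succ_last, consS_succ]

lemma zero_ne_last {n : ℕ} : (0 : Fin (n+2)) ≠ Fin.last (n+1) := by
  simp [Fin.ext_iff]

lemma succ_ne_last {n : ℕ} {k : Fin (n+1)} (hk : k ≠ Fin.last n) :
    k.succ ≠ Fin.last (n+1) := by
  rw [← Fin.succ_last]
  exact fun e => hk (Fin.succ_injective _ e)

lemma r_cons {n : ℕ} {d : Fin 3} {u v : St n} (h : nonCliqueRel 3 n u v) :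
    nonCliqueRel 3 (n+1) (consS d u) (consS d v) := by
  obtain ⟨t, ht, i, j, hij, hlt, hut, hvt, hgt⟩ := h
  refine ⟨t.succ, by simpa using ht, i, j, hij, ?_, by simp [hut], by simp [hvt], ?_⟩
  · intro k
    refine Fin.cases ?_ ?_ k
    · intro _; rfl
    · intro k' hk'
      have : k' < t := by simpa [Fin.succ_lt_succ_iff] using hk'
      simpa using hlt k' this
  · intro k
    refine Fin.cases ?_ ?_ k
    · intro h0; exact absurd h0 (by simp [Fin.lt_def])
    · intro k' hk'
      have : t < k' := by simpa [Fin.succ_lt_succ_iff] using hk'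
      simpa using hgt k' this

lemma r_cross {n : ℕ} {d e : Fin 3} (hde : d ≠ e) :
    nonCliqueRel 3 (n+1) (consS d (constS e)) (consS e (constS d)) := by
  refine ⟨0, by simp, d, e, hde, ?_, rfl, rfl, ?_⟩
  · intro k hk; exact absurd hk (by simp)
  · intro k
    refine Fin.cases ?_ ?_ k
    · intro h0; exact absurd h0 (by simp [Fin.lt_def])
    · intro k' _; simp [constS]

lemma consS_case {n : ℕ} {d : Fin 3} {u : St n} {w : St (n+1)}
    (h : nonCliqueRel 3 (n+1) (consS d u) w) :
    (∃ w', w = consS d w' ∧ nonCliqueRel 3 n u w') ∨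
    (∃ e, e ≠ d ∧ u = constS e ∧ w = consS e (constS d)) := by
  obtain ⟨t, ht, i, j, hij, hlt, hut, hvt, hgt⟩ := h
  rcases Fin.eq_zero_or_eq_succ t with rfl | ⟨t', rfl⟩
  · -- cross case
    have hid : i = d := by simpa using hut.symm
    subst hid
    right
    refine ⟨j, fun e => hij e.symm, ?_, ?_⟩
    · funext k
      have := (hgt k.succ (by simp [Fin.lt_def])).1
      simpa [constS] using this
    · funext k
      refine Fin.cases ?_ ?_ k
      · simpa using hvt
      · intro k'
        have := (hgt k'.succ (by simp [Fin.lt_def])).2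
        simpa [constS] using this
  · -- inner case
    left
    have ht' : (t' : ℕ) < n := by simpa using ht
    have hw0 : w 0 = d := by
      have := hlt 0 (by simp [Fin.lt_def])
      simpa using this.symm
    refine ⟨Fin.tail w, ?_, ?_⟩
    · funext k
      refine Fin.cases ?_ ?_ k
      · simpa using hw0
      · intro k'; simp [Fin.tail]
    · refine ⟨t', ht', u t', w t'.succ, ?_, ?_, rfl, rfl, ?_⟩
      · have h1 : u t' = i := by simpa using hut
        have h2 : w t'.succ = j := hvt
        rw [h1, h2]; exact hij
      · intro k hk
        have := hlt k.succ (by simpa [Fin.succ_lt_succ_iff] using hk)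
        simpa [Fin.tail] using this
      · intro k hk
        have := hgt k.succ (by simpa [Fin.succ_lt_succ_iff] using hk)
        have h1 : u t' = i := by simpa using hut
        have h2 : w t'.succ = j := hvt
        refine ⟨by simpa [h2] using this.1, ?_⟩
        simp only [Fin.tail]
        rw [this.2, h1]

def consV {n : ℕ} (d : Fin 3) : V3 n → V3 (n+1) :=
  Quotient.map' (consS d) (fun u v h => by
    have h' : Relation.EqvGen (nonCliqueRel 3 n) u v := h
    rcases eqvGen_iff.mp h' with rfl | hr
    · exact Relation.EqvGen.refl _
    · exact Relation.EqvGen.rel _ _ (r_cons hr))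

lemma consV_mk {n : ℕ} (d : Fin 3) (u : St n) : consV d (mkV u) = mkV (consS d u) := rfl

lemma cons_rep {n : ℕ} {d : Fin 3} {a : V3 n} {w : St (n+1)} (h : consV d a = mkV w) :
    (∃ p, w = consS d p ∧ mkV p = a) ∨
    (∃ e, e ≠ d ∧ a = cornerV n e ∧ w = consS e (constS d)) := by
  obtain ⟨u, hu⟩ := Quot.exists_rep a
  have hu' : mkV u = a := hu
  rw [← hu', consV_mk] at h
  rcases mkV_eq_iff.mp h with he | hr
  · exact Or.inl ⟨u, he.symm, hu'⟩
  · rcases consS_case hr with ⟨w', rfl, hw'⟩ | ⟨e, hed, rfl, rfl⟩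
    · exact Or.inl ⟨w', rfl, by rw [← hu']; exact (mkV_eq_iff.mpr (Or.inr hw')).symm⟩
    · exact Or.inr ⟨e, hed, by rw [← hu']; rfl, rfl⟩

lemma consV_corner_self {n : ℕ} (d : Fin 3) : consV d (cornerV n d) = cornerV (n+1) d := by
  rw [cornerV, consV_mk]
  congr 1
  funext k
  refine Fin.cases ?_ ?_ k
  · rfl
  · intro k'; simp [constS]

lemma glue {n : ℕ} {d e : Fin 3} (hde : d ≠ e) :
    consV d (cornerV n e) = consV e (cornerV n d) := by
  rw [cornerV, cornerV, consV_mk, consV_mk]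
  exact mkV_eq_iff.mpr (Or.inr (r_cross hde))

lemma consV_inj {n : ℕ} {d : Fin 3} {a b : V3 n} (h : consV d a = consV d b) : a = b := by
  obtain ⟨v, hv⟩ := Quot.exists_rep b
  have hv' : mkV v = b := hv
  rw [← hv', consV_mk] at h
  rcases cons_rep h with ⟨p, hp, hpa⟩ | ⟨e, hed, _, hw⟩
  · have : v = p := funext fun k => by
      have := congrFun hp k.succ
      simpa using this
    rw [← hpa, ← this, hv']
  · have := congrFun hw 0
    simp at this
    exact absurd this.symm hed

lemma consV_cross_eq {n : ℕ} {d e : Fin 3} {a b : V3 n} (hde : d ≠ e)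
    (h : consV d a = consV e b) : a = cornerV n e ∧ b = cornerV n d := by
  obtain ⟨v, hv⟩ := Quot.exists_rep b
  have hv' : mkV v = b := hv
  rw [← hv', consV_mk] at h
  rcases cons_rep h with ⟨p, hp, _⟩ | ⟨e', he', ha, hw⟩
  · have := congrFun hp 0
    simp at this
    exact absurd this.symm hde
  · have h0 := congrFun hw 0
    simp at h0
    subst h0
    have hvc : v = constS d := funext fun k => by
      have := congrFun hw k.succ
      simpa using this
    exact ⟨ha, by rw [← hv', hvc]; rfl⟩

end Cons


section AdjCons

lemma mkV_ne_corner_of_last {n : ℕ} {p : St n} {e : Fin 3} (h : p (Fin.last n) ≠ e) :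
    mkV p ≠ cornerV n e := by
  intro hc
  have := mkV_const_iff.mp hc.symm
  exact h (by rw [this]; rfl)

lemma adj_cons_same_iff {n : ℕ} {d : Fin 3} {a b : V3 n} :
    (sierpinskiTriangle 3 (n+1)).Adj (consV d a) (consV d b) ↔
    (sierpinskiTriangle 3 n).Adj a b := by
  constructor
  · intro h
    rw [adj_iff] at h ⊢
    obtain ⟨hne, u', v', hu', hv', hpre, hlast⟩ := h
    have hne' : a ≠ b := fun e => hne (by rw [e])
    rcases cons_rep hu'.symm with ⟨p, rfl, hpa⟩ | ⟨e, hed, ha, rfl⟩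
    · rcases cons_rep hv'.symm with ⟨q, rfl, hqb⟩ | ⟨e', hed', hb, rfl⟩
      · refine ⟨hne', p, q, hpa, hqb, ?_, ?_⟩
        · intro k hk
          have := hpre k.succ (succ_ne_last hk)
          simpa using this
        · have h1 := consS_last d p
          have h2 := consS_last d q
          rw [h1, h2] at hlast
          exact hlast
      · have := hpre 0 zero_ne_last
        simp at this
        exact absurd this.symm hed'
    · rcases cons_rep hv'.symm with ⟨q, rfl, hqb⟩ | ⟨e', hed', hb, rfl⟩
      · have := hpre 0 zero_ne_last
        simp at this
        exact absurd this hed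
      · exfalso
        apply hlast
        rw [consS_last, consS_last]
  · intro h
    rw [adj_iff] at h ⊢
    obtain ⟨hne, u, v, hu, hv, hpre, hlast⟩ := h
    refine ⟨fun e => hne (consV_inj e), consS d u, consS d v,
      by rw [← hu]; rfl, by rw [← hv]; rfl, ?_, ?_⟩
    · intro k
      refine Fin.cases ?_ ?_ k
      · intro _; rfl
      · intro k' hk'
        have hk'' : k' ≠ Fin.last n := by
          intro e; exact hk' (by rw [e, Fin.succ_last])
        simpa using hpre k' hk''
    · rw [consS_last, consS_last]; exact hlast

lemma adj_cons_cross {n : ℕ} {d e : Fin 3} {a b : V3 n} (hde : d ≠ e)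
    (h : (sierpinskiTriangle 3 (n+1)).Adj (consV d a) (consV e b)) :
    (b = cornerV n d ∧ (sierpinskiTriangle 3 n).Adj a (cornerV n e)) ∨
    (a = cornerV n e ∧ (sierpinskiTriangle 3 n).Adj b (cornerV n d)) ∨
    (n = 0 ∧ ∃ c, c ≠ d ∧ c ≠ e ∧ a = cornerV n c ∧ b = cornerV n c) := by
  rw [adj_iff] at h
  obtain ⟨hne, u', v', hu', hv', hpre, hlast⟩ := h
  rcases cons_rep hu'.symm with ⟨p, rfl, hpa⟩ | ⟨c, hcd, ha, rfl⟩
  · rcases cons_rep hv'.symm with ⟨q, rfl, hqb⟩ | ⟨c', hce, hb, rfl⟩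
    · have := hpre 0 zero_ne_last
      simp at this
      exact absurd this hde
    · -- v' cross : v' = consS c' (constS e), b = corner c'
      have h0 := hpre 0 zero_ne_last
      simp at h0
      -- h0 : d = c'
      left
      subst h0
      refine ⟨hb, ?_⟩
      rw [adj_iff]
      have hplast : p (Fin.last n) ≠ e := by
        intro hp
        apply hlast
        rw [consS_last, consS_last, hp]
        rfl
      refine ⟨?_, p, constS e, hpa, rfl, ?_, hplast⟩
      · rw [← hpa]; exact mkV_ne_corner_of_last hplast
      · intro k hk
        have := hpre k.succ (succ_ne_last hk)
        simpa [constS] using this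
  · rcases cons_rep hv'.symm with ⟨q, rfl, hqb⟩ | ⟨c', hce, hb, rfl⟩
    · have h0 := hpre 0 zero_ne_last
      simp at h0
      -- h0 : c = e
      right; left
      subst h0
      refine ⟨ha, ?_⟩
      rw [adj_iff]
      have hqlast : q (Fin.last n) ≠ d := by
        intro hq
        apply hlast
        rw [consS_last, consS_last, hq]
        rfl
      refine ⟨?_, q, constS d, hqb, rfl, ?_, hqlast⟩
      · rw [← hqb]; exact mkV_ne_corner_of_last hqlast
      · intro k hk
        have := (hpre k.succ (succ_ne_last hk)).symm
        simpa [constS] using this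
    · have h0 := hpre 0 zero_ne_last
      simp at h0
      -- h0 : c = c'
      by_cases hn : n = 0
      · subst h0
        exact Or.inr (Or.inr ⟨hn, c, hcd, hce, ha, hb⟩)
      · exfalso
        obtain ⟨m, rfl⟩ := Nat.exists_eq_succ_of_ne_zero hn
        have h1 := hpre ((0 : Fin (m.succ+1)).succ) (succ_ne_last (by simp [Fin.ext_iff]))
        simp [constS] at h1
        exact hde h1
  
end AdjCons


section Path

def third (x y : Fin 3) : Fin 3 := 3 - x - y

lemma third_ne : ∀ x y : Fin 3, x ≠ y → third x y ≠ x ∧ third x y ≠ y := by decide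

lemma third_spec : ∀ x y c : Fin 3, x ≠ y → c ≠ x → c ≠ y → c = third x y := by decide

def gPath : (n : ℕ) → Fin 3 → Fin 3 → ℕ → V3 n
  | 0, x, y, k => if k = 0 then cornerV 0 x else cornerV 0 y
  | n+1, x, y, k =>
    if k ≤ 3^n then consV x (gPath n x (third x y) k)
    else if k ≤ 2*3^n then consV (third x y) (gPath n x y (k - 3^n))
    else consV y (gPath n (third x y) y (k - 2*3^n))

structure GPs (n : ℕ) (x y : Fin 3) : Prop where
  a0 : gPath n x y 0 = cornerV n x
  atop : gPath n x y (3^n) = cornerV n y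
  avoid : ∀ k, k ≤ 3^n → gPath n x y k ≠ cornerV n (third x y)
  inj : ∀ k l, k ≤ 3^n → l ≤ 3^n → gPath n x y k = gPath n x y l → k = l
  adj : ∀ k, k + 1 ≤ 3^n →
    (sierpinskiTriangle 3 n).Adj (gPath n x y k) (gPath n x y (k+1))
  chord : ∀ k l, k ≤ 3^n → l ≤ 3^n →
    (sierpinskiTriangle 3 n).Adj (gPath n x y k) (gPath n x y l) → l = k + 1 ∨ k = l + 1

lemma GPs.eq_zero {n : ℕ} {x y : Fin 3} {k : ℕ} (h : GPs n x y) (hk : k ≤ 3^n)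
    (he : gPath n x y k = cornerV n x) : k = 0 :=
  h.inj k 0 hk (Nat.zero_le _) (by rw [he, h.a0])

lemma GPs.eq_top {n : ℕ} {x y : Fin 3} {k : ℕ} (h : GPs n x y) (hk : k ≤ 3^n)
    (he : gPath n x y k = cornerV n y) : k = 3^n :=
  h.inj k (3^n) hk le_rfl (by rw [he, h.atop])

lemma adj_corners0 {x y : Fin 3} (hxy : x ≠ y) :
    (sierpinskiTriangle 3 0).Adj (cornerV 0 x) (cornerV 0 y) := by
  rw [adj_iff]
  refine ⟨fun e => hxy (cornerV_inj e), constS x, constS y, rfl, rfl, ?_, hxy⟩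
  intro k hk
  exact absurd (Fin.ext (by omega) : k = Fin.last 0) hk

theorem gProps : ∀ (n : ℕ) (x y : Fin 3), x ≠ y → GPs n x y := by
  intro n
  induction n with
  | zero =>
    intro x y hxy
    refine ⟨by simp [gPath], by simp [gPath], ?_, ?_, ?_, ?_⟩
    · intro k _
      simp only [gPath]
      split_ifs <;> intro hc
      · exact (third_ne x y hxy).1 (cornerV_inj hc).symm
      · exact (third_ne x y hxy).2 (cornerV_inj hc).symm
    · intro k l hk hl he
      simp only [gPath] at he
      split_ifs at he with h1 h2
      · omega
      · exact absurd (cornerV_inj he) hxy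
      · exact absurd (cornerV_inj he).symm hxy
      · omega
    · intro k hk
      have h0 : k = 0 := by omega
      subst h0
      simpa [gPath] using adj_corners0 hxy
    · intro k l hk hl hadj
      have : k ≠ l := fun e => hadj.ne (by rw [e])
      omega
  | succ n ih =>
    intro x y hxy
    have hthird := third_ne x y hxy
    have hzx : third x y ≠ x := hthird.1
    have hzy : third x y ≠ y := hthird.2
    have hxz : x ≠ third x y := hzx.symm
    have hyz : y ≠ third x y := hzy.symm
    have h3xz : third x (third x y) = y :=
      (third_spec x (third x y) y hxz hxy.symm hyz).symm
    have h3zy : third (third x y) y = x :=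
      (third_spec (third x y) y x hzy hxz hxy).symm
    have H1 := ih x (third x y) hxz
    have H2 := ih x y hxy
    have H3 := ih (third x y) y hzy
    have hPpos : 0 < 3^n := pow_pos (by norm_num) n
    have htop : (3:ℕ)^(n+1) = 3*3^n := by rw [pow_succ]; ring
    have hseg1 : ∀ k : ℕ, k ≤ 3^n →
        gPath (n+1) x y k = consV x (gPath n x (third x y) k) := by
      intro k hk; simp only [gPath]; rw [if_pos hk]
    have hseg2 : ∀ k : ℕ, 3^n < k → k ≤ 2*3^n →
        gPath (n+1) x y k = consV (third x y) (gPath n x y (k - 3^n)) := by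
      intro k hk1 hk2; simp only [gPath]; rw [if_neg (by omega), if_pos hk2]
    have hseg3 : ∀ k : ℕ, 2*3^n < k →
        gPath (n+1) x y k = consV y (gPath n (third x y) y (k - 2*3^n)) := by
      intro k hk; simp only [gPath]; rw [if_neg (by omega), if_neg (by omega)]
    have hj1 : consV x (gPath n x (third x y) (3^n)) = consV (third x y) (gPath n x y 0) := by
      rw [H1.atop, H2.a0, glue hxz]
    have hj2 : consV (third x y) (gPath n x y (3^n)) =
        consV y (gPath n (third x y) y 0) := by
      rw [H2.atop, H3.a0, glue hzy]
    have avoid1 : ∀ k, k ≤ 3^n → gPath n x (third x y) k ≠ cornerV n y := by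
      intro k hk hc
      exact H1.avoid k hk (by rw [h3xz]; exact hc)
    have avoid3 : ∀ k, k ≤ 3^n → gPath n (third x y) y k ≠ cornerV n x := by
      intro k hk hc
      exact H3.avoid k hk (by rw [h3zy]; exact hc)
    refine ⟨?_, ?_, ?_, ?_, ?_, ?_⟩
    · rw [hseg1 0 (Nat.zero_le _), H1.a0, consV_corner_self]
    · rw [htop, hseg3 (3*3^n) (by omega), show 3*3^n - 2*3^n = 3^n by omega,
        H3.atop, consV_corner_self]
    · intro k hk
      rw [htop] at hk
      rw [← consV_corner_self (third x y)]
      by_cases h1 : k ≤ 3^n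
      · rw [hseg1 k h1]
        intro hc
        exact hzx (cornerV_inj (consV_cross_eq hxz hc).2)
      · by_cases h2 : k ≤ 2*3^n
        · rw [hseg2 k (by omega) h2]
          intro hc
          exact H2.avoid (k - 3^n) (by omega) (consV_inj hc)
        · rw [hseg3 k (by omega)]
          intro hc
          exact hzy (cornerV_inj (consV_cross_eq hyz hc).2)
    · intro k l hk hl he
      rw [htop] at hk hl
      by_cases hk1 : k ≤ 3^n <;> by_cases hl1 : l ≤ 3^n
      · rw [hseg1 k hk1, hseg1 l hl1] at he
        exact H1.inj k l hk1 hl1 (consV_inj he)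
      · by_cases hl2 : l ≤ 2*3^n
        · rw [hseg1 k hk1, hseg2 l (by omega) hl2] at he
          obtain ⟨_, hB⟩ := consV_cross_eq hxz he
          have := H2.eq_zero (k := l - 3^n) (by omega) hB
          omega
        · rw [hseg1 k hk1, hseg3 l (by omega)] at he
          obtain ⟨hA, _⟩ := consV_cross_eq hxy he
          exact absurd hA (avoid1 k hk1)
      · by_cases hk2 : k ≤ 2*3^n
        · rw [hseg2 k (by omega) hk2, hseg1 l hl1] at he
          obtain ⟨_, hB⟩ := consV_cross_eq hxz he.symm
          have := H2.eq_zero (k := k - 3^n) (by omega) hB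
          omega
        · rw [hseg3 k (by omega), hseg1 l hl1] at he
          obtain ⟨hA, _⟩ := consV_cross_eq hxy he.symm
          exact absurd hA (avoid1 l hl1)
      · by_cases hk2 : k ≤ 2*3^n <;> by_cases hl2 : l ≤ 2*3^n
        · rw [hseg2 k (by omega) hk2, hseg2 l (by omega) hl2] at he
          have := H2.inj (k - 3^n) (l - 3^n) (by omega) (by omega) (consV_inj he)
          omega
        · rw [hseg2 k (by omega) hk2, hseg3 l (by omega)] at he
          obtain ⟨_, hB⟩ := consV_cross_eq hzy he
          have := H3.eq_zero (k := l - 2*3^n) (by omega) hB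
          omega
        · rw [hseg3 k (by omega), hseg2 l (by omega) hl2] at he
          obtain ⟨_, hB⟩ := consV_cross_eq hzy he.symm
          have := H3.eq_zero (k := k - 2*3^n) (by omega) hB
          omega
        · rw [hseg3 k (by omega), hseg3 l (by omega)] at he
          have := H3.inj (k - 2*3^n) (l - 2*3^n) (by omega) (by omega) (consV_inj he)
          omega
    · intro k hk
      rw [htop] at hk
      by_cases h1 : k + 1 ≤ 3^n
      · rw [hseg1 k (by omega), hseg1 (k+1) h1]
        exact adj_cons_same_iff.mpr (H1.adj k h1)
      · by_cases h2 : k + 1 ≤ 2*3^n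
        · rw [hseg2 (k+1) (by omega) h2]
          by_cases h3 : k ≤ 3^n
          · have hk3 : k = 3^n := by omega
            subst hk3
            rw [hseg1 _ le_rfl, hj1, show 3^n + 1 - 3^n = 1 by omega]
            exact adj_cons_same_iff.mpr (by simpa using H2.adj 0 (by omega))
          · rw [hseg2 k (by omega) (by omega), show k + 1 - 3^n = (k - 3^n) + 1 by omega]
            exact adj_cons_same_iff.mpr (H2.adj (k - 3^n) (by omega))
        · rw [hseg3 (k+1) (by omega)]
          by_cases h3 : k ≤ 2*3^n
          · have hk3 : k = 2*3^n := by omega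
            subst hk3
            rw [hseg2 _ (by omega) le_rfl, show 2*3^n - 3^n = 3^n by omega, hj2,
              show 2*3^n + 1 - 2*3^n = 1 by omega]
            exact adj_cons_same_iff.mpr (by simpa using H3.adj 0 (by omega))
          · rw [hseg3 k (by omega), show k + 1 - 2*3^n = (k - 2*3^n) + 1 by omega]
            exact adj_cons_same_iff.mpr (H3.adj (k - 2*3^n) (by omega))
    · intro k l hk hl hadj
      rw [htop] at hk hl
      by_cases hk1 : k ≤ 3^n <;> by_cases hl1 : l ≤ 3^n
      · rw [hseg1 k hk1, hseg1 l hl1] at hadj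
        exact H1.chord k l hk1 hl1 (adj_cons_same_iff.mp hadj)
      · by_cases hl2 : l ≤ 2*3^n
        · -- (1,2)
          rw [hseg1 k hk1, hseg2 l (by omega) hl2] at hadj
          rcases adj_cons_cross hxz hadj with ⟨hb, _⟩ | ⟨ha, hAdj⟩ | ⟨_, c, hcx, hcz, ha, _⟩
          · have := H2.eq_zero (k := l - 3^n) (by omega) hb
            omega
          · rw [← H2.a0] at hAdj
            rcases H2.chord (l - 3^n) 0 (by omega) (by omega) hAdj with h | h
            · omega
            · have hk3 : k = 3^n := H1.eq_top hk1 ha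
              omega
          · have hcy : c = y := by
              have h' := third_spec x (third x y) c hxz hcx hcz
              rw [h3xz] at h'
              exact h'
            subst hcy
            exact absurd ha (avoid1 k hk1)
        · -- (1,3)
          rw [hseg1 k hk1, hseg3 l (by omega)] at hadj
          rcases adj_cons_cross hxy hadj with ⟨hb, _⟩ | ⟨ha, _⟩ | ⟨_, c, hcx, hcy, ha, hb⟩
          · exact absurd hb (avoid3 (l - 2*3^n) (by omega))
          · exact absurd ha (avoid1 k hk1)
          · have hcz : c = third x y := third_spec x y c hxy hcx hcy
            subst hcz
            have := H3.eq_zero (k := l - 2*3^n) (by omega) hb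
            omega
      · by_cases hk2 : k ≤ 2*3^n
        · -- (2,1)
          rw [hseg2 k (by omega) hk2, hseg1 l hl1] at hadj
          rcases adj_cons_cross hzx hadj with ⟨hb, hAdj⟩ | ⟨ha, _⟩ | ⟨_, c, hcz, hcx, ha, hb⟩
          · rw [← H2.a0] at hAdj
            rcases H2.chord (k - 3^n) 0 (by omega) (by omega) hAdj with h | h
            · omega
            · have hl3 : l = 3^n := H1.eq_top hl1 hb
              omega
          · have := H2.eq_zero (k := k - 3^n) (by omega) ha
            omega
          · have hcy : c = y := by
              have h' := third_spec x (third x y) c hxz hcx hcz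
              rw [h3xz] at h'
              exact h'
            subst hcy
            exact absurd hb (avoid1 l hl1)
        · -- (3,1)
          rw [hseg3 k (by omega), hseg1 l hl1] at hadj
          rcases adj_cons_cross hxy.symm hadj with ⟨hb, _⟩ | ⟨ha, _⟩ | ⟨_, c, hcy, hcx, ha, hb⟩
          · exact absurd hb (avoid1 l hl1)
          · exact absurd ha (avoid3 (k - 2*3^n) (by omega))
          · have hcz : c = third x y := third_spec x y c hxy hcx hcy
            subst hcz
            have := H3.eq_zero (k := k - 2*3^n) (by omega) ha
            omega
      · by_cases hk2 : k ≤ 2*3^n <;> by_cases hl2 : l ≤ 2*3^n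
        · rw [hseg2 k (by omega) hk2, hseg2 l (by omega) hl2] at hadj
          rcases H2.chord (k - 3^n) (l - 3^n) (by omega) (by omega)
            (adj_cons_same_iff.mp hadj) with h | h
          · left; omega
          · right; omega
        · -- (2,3)
          rw [hseg2 k (by omega) hk2, hseg3 l (by omega)] at hadj
          rcases adj_cons_cross hzy hadj with ⟨hb, _⟩ | ⟨ha, hAdj⟩ | ⟨_, c, hcz, hcy, ha, _⟩
          · have := H3.eq_zero (k := l - 2*3^n) (by omega) hb
            omega
          · rw [← H3.a0] at hAdj
            rcases H3.chord (l - 2*3^n) 0 (by omega) (by omega) hAdj with h | h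
            · omega
            · have hk3 : k - 3^n = 3^n := H2.eq_top (by omega) ha
              left; omega
          · have hcx : c = x := by
              have h' := third_spec (third x y) y c hzy hcz hcy
              rw [h3zy] at h'
              exact h'
            subst hcx
            have := H2.eq_zero (k := k - 3^n) (by omega) ha
            omega
        · -- (3,2)
          rw [hseg3 k (by omega), hseg2 l (by omega) hl2] at hadj
          rcases adj_cons_cross hyz hadj with ⟨hb, hAdj⟩ | ⟨ha, _⟩ | ⟨_, c, hcy, hcz, ha, hb⟩
          · rw [← H3.a0] at hAdj
            rcases H3.chord (k - 2*3^n) 0 (by omega) (by omega) hAdj with h | h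
            · omega
            · have hl3 : l - 3^n = 3^n := H2.eq_top (by omega) hb
              right; omega
          · have := H3.eq_zero (k := k - 2*3^n) (by omega) ha
            omega
          · have hcx : c = x := by
              have h' := third_spec (third x y) y c hzy hcz hcy
              rw [h3zy] at h'
              exact h'
            subst hcx
            have := H2.eq_zero (k := l - 3^n) (by omega) hb
            omega
        · rw [hseg3 k (by omega), hseg3 l (by omega)] at hadj
          rcases H3.chord (k - 2*3^n) (l - 2*3^n) (by omega) (by omega)
            (adj_cons_same_iff.mp hadj) with h | h
          · left; omega
          · right; omega

end Path


section Acyclic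

lemma acyclic_of_linear {α : Type*} {G : SimpleGraph α} (f : α → ℕ)
    (hinj : Function.Injective f)
    (hadj : ∀ a b, G.Adj a b → f b = f a + 1 ∨ f a = f b + 1) : G.IsAcyclic := by
  classical
  intro v p hp
  have hpne : p.support.toFinset.Nonempty := by
    simp [List.toFinset_nonempty_iff]
  obtain ⟨u, hu, hmax⟩ := p.support.toFinset.exists_max_image f hpne
  rw [List.mem_toFinset] at hu
  have hmax' : ∀ w ∈ p.support, f w ≤ f u := fun w hw => hmax w (List.mem_toFinset.mpr hw)
  have key : ∀ (q : G.Walk u u), q.IsCycle → (∀ w ∈ q.support, f w ≤ f u) → False := by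
    intro q hq hqsub
    cases q with
    | nil => simp [SimpleGraph.Walk.isCycle_def] at hq
    | cons h q' =>
      rename_i b
      rw [SimpleGraph.Walk.cons_isCycle_iff] at hq
      obtain ⟨hpath, hedge⟩ := hq
      have hub : u ≠ b := h.ne
      obtain ⟨c, h2, r, hr⟩ := SimpleGraph.Walk.exists_eq_cons_of_ne hub q'.reverse
      have hbmem : b ∈ (SimpleGraph.Walk.cons h q').support := by
        rw [SimpleGraph.Walk.support_cons]
        exact List.mem_cons_of_mem _ q'.start_mem_support
      have hcmem : c ∈ (SimpleGraph.Walk.cons h q').support := by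
        have hc1 : c ∈ q'.reverse.support := by
          rw [hr, SimpleGraph.Walk.support_cons]
          exact List.mem_cons_of_mem _ r.start_mem_support
        rw [SimpleGraph.Walk.support_reverse, List.mem_reverse] at hc1
        rw [SimpleGraph.Walk.support_cons]
        exact List.mem_cons_of_mem _ hc1
      have hbc : b ≠ c := by
        rintro rfl
        apply hedge
        have he1 : s(u, b) ∈ q'.reverse.edges := by
          rw [hr, SimpleGraph.Walk.edges_cons]
          exact List.mem_cons_self
        rwa [SimpleGraph.Walk.edges_reverse, List.mem_reverse] at he1
      have hfb : f b < f u :=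
        lt_of_le_of_ne (hqsub b hbmem) (fun e => hub (hinj e).symm)
      have hfc : f c < f u :=
        lt_of_le_of_ne (hqsub c hcmem) (fun e => h2.ne (hinj e).symm)
      rcases hadj u b h with h' | h'
      · omega
      · rcases hadj u c h2 with h'' | h''
        · omega
        · exact hbc (hinj (by omega))
  apply key (p.rotate u hu) (hp.rotate hu)
  intro w hw
  rw [SimpleGraph.Walk.support_eq_cons] at hw
  rcases List.mem_cons.mp hw with rfl | hw'
  · exact le_rfl
  · have hrot := SimpleGraph.Walk.support_rotate p u hu
    rw [hrot.mem_iff] at hw'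
    exact hmax' w (List.mem_of_mem_tail hw')

lemma no_triangle {α : Type*} {G : SimpleGraph α} (hG : G.IsAcyclic) {a b c : α}
    (hab : G.Adj a b) (hbc : G.Adj b c) (hac : G.Adj a c) : False := by
  rw [isAcyclic_iff_path_unique] at hG
  have hp1 : (SimpleGraph.Walk.cons hac SimpleGraph.Walk.nil).IsPath := by
    simp [SimpleGraph.Walk.isPath_def, hac.ne]
  have hp2 : (SimpleGraph.Walk.cons hab (SimpleGraph.Walk.cons hbc SimpleGraph.Walk.nil)).IsPath := by
    simp [SimpleGraph.Walk.isPath_def, hab.ne, hac.ne, hbc.ne]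
  have := hG ⟨_, hp1⟩ ⟨_, hp2⟩
  have hlen := congrArg (fun p : G.Path a c => p.1.length) this
  simp at hlen

end Acyclic


section Count

lemma exists_partner {n : ℕ} {u : St n} (h : ¬ ∀ k, u k = u (Fin.last n)) :
    ∃ w, nonCliqueRel 3 n u w ∧ w ≠ u := by
  classical
  have hne : (Finset.univ.filter (fun k : Fin (n+1) => u k ≠ u (Fin.last n))).Nonempty := by
    by_contra hc
    rw [Finset.not_nonempty_iff_eq_empty] at hc
    apply h
    intro k
    by_contra hk
    have : k ∈ Finset.univ.filter (fun k : Fin (n+1) => u k ≠ u (Fin.last n)) :=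
      Finset.mem_filter.mpr ⟨Finset.mem_univ _, hk⟩
    simp [hc] at this
  set t := (Finset.univ.filter (fun k : Fin (n+1) => u k ≠ u (Fin.last n))).max' hne with ht
  have htmem := (Finset.univ.filter (fun k : Fin (n+1) => u k ≠ u (Fin.last n))).max'_mem hne
  have htprop : u t ≠ u (Fin.last n) := (Finset.mem_filter.mp htmem).2
  have hgt : ∀ k : Fin (n+1), t < k → u k = u (Fin.last n) := by
    intro k hk
    by_contra hc
    have hmem : k ∈ Finset.univ.filter (fun k : Fin (n+1) => u k ≠ u (Fin.last n)) :=
      Finset.mem_filter.mpr ⟨Finset.mem_univ _, hc⟩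
    exact absurd (Finset.le_max' _ k hmem) (not_le.mpr hk)
  have htn : (t : ℕ) < n := by
    have h1 : (t : ℕ) < n + 1 := t.isLt
    have h2 : (t : ℕ) ≠ n := by
      intro e
      exact htprop (by rw [show t = Fin.last n from Fin.ext (by simp [Fin.last, e])])
    omega
  refine ⟨fun k => if k < t then u k else if k = t then u (Fin.last n) else u t,
    ⟨t, htn, u t, u (Fin.last n), htprop, ?_, rfl, ?_, ?_⟩, ?_⟩
  · intro k hk
    show u k = if k < t then u k else if k = t then u (Fin.last n) else u t
    rw [if_pos hk]
  · show (if t < t then u t else if t = t then u (Fin.last n) else u t) = u (Fin.last n)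
    rw [if_neg (lt_irrefl t), if_pos rfl]
  · intro k hk
    refine ⟨hgt k hk, ?_⟩
    show (if k < t then u k else if k = t then u (Fin.last n) else u t) = u t
    rw [if_neg (by exact not_lt.mpr hk.le), if_neg (ne_of_gt hk)]
  · intro e
    have h2 := congrFun e t
    simp at h2
    exact htprop h2.symm

lemma fiber_corner {n : ℕ} (c : Fin 3) :
    Finset.univ.filter (fun w : St n => mkV w = cornerV n c) = {constS c} := by
  ext w
  simp only [Finset.mem_filter, Finset.mem_univ, true_and, Finset.mem_singleton]
  constructor
  · intro hw
    exact mkV_const_iff.mp hw.symm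
  · rintro rfl
    rfl

lemma fiber_card_ge_two {n : ℕ} {x : V3 n} (hx : ∀ c, x ≠ cornerV n c) :
    2 ≤ (Finset.univ.filter (fun w : St n => mkV w = x)).card := by
  obtain ⟨u, hu⟩ := Quot.exists_rep x
  have hu' : mkV u = x := hu
  have hnc : ¬ ∀ k, u k = u (Fin.last n) := by
    intro hc
    apply hx (u (Fin.last n))
    rw [← hu']
    have he : u = constS (u (Fin.last n)) := funext fun k => hc k
    rw [he]
    rfl
  obtain ⟨w, hw, hwne⟩ := exists_partner hnc
  have hsub : ({w, u} : Finset (St n)) ⊆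
      Finset.univ.filter (fun w' : St n => mkV w' = x) := by
    intro a ha
    rcases Finset.mem_insert.mp ha with rfl | ha
    · exact Finset.mem_filter.mpr ⟨Finset.mem_univ _,
        by rw [← hu']; exact (mkV_eq_iff.mpr (Or.inr hw)).symm⟩
    · rw [Finset.mem_singleton] at ha
      subst ha
      exact Finset.mem_filter.mpr ⟨Finset.mem_univ _, hu'⟩
  calc 2 = ({w, u} : Finset (St n)).card := (Finset.card_pair hwne).symm
    _ ≤ _ := Finset.card_le_card hsub

lemma fiber_card_le_two {n : ℕ} (x : V3 n) :
    (Finset.univ.filter (fun w : St n => mkV w = x)).card ≤ 2 := by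
  classical
  obtain ⟨u, hu⟩ := Quot.exists_rep x
  have hu' : mkV u = x := hu
  by_cases hex : ∃ w, nonCliqueRel 3 n u w
  · obtain ⟨w0, hw0⟩ := hex
    have hsub : Finset.univ.filter (fun w : St n => mkV w = x) ⊆ {u, w0} := by
      intro a ha
      have ha' : mkV u = mkV a := by rw [hu', (Finset.mem_filter.mp ha).2]
      rcases mkV_eq_iff.mp ha' with rfl | hr
      · exact Finset.mem_insert_self _ _
      · rw [r_funct hw0 hr]
        exact Finset.mem_insert_of_mem (Finset.mem_singleton_self _)
    exact (Finset.card_le_card hsub).trans ((Finset.card_insert_le _ _).trans (by simp))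
  · have hsub : Finset.univ.filter (fun w : St n => mkV w = x) ⊆ {u} := by
      intro a ha
      have ha' : mkV u = mkV a := by rw [hu', (Finset.mem_filter.mp ha).2]
      rcases mkV_eq_iff.mp ha' with rfl | hr
      · exact Finset.mem_singleton_self _
      · exact absurd ⟨a, hr⟩ hex
    exact (Finset.card_le_card hsub).trans (by simp)

lemma fiber_card_pos {n : ℕ} (x : V3 n) :
    1 ≤ (Finset.univ.filter (fun w : St n => mkV w = x)).card := by
  obtain ⟨u, hu⟩ := Quot.exists_rep x
  exact Finset.card_pos.mpr ⟨u, Finset.mem_filter.mpr ⟨Finset.mem_univ _, hu⟩⟩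

def cornersC (n : ℕ) : Finset (V3 n) := {cornerV n 0, cornerV n 1, cornerV n 2}

lemma cornersC_card (n : ℕ) : (cornersC n).card = 3 := by
  rw [cornersC]
  rw [Finset.card_insert_of_notMem, Finset.card_insert_of_notMem, Finset.card_singleton]
  · simp only [Finset.mem_singleton]
    exact fun e => absurd (cornerV_inj e) (by decide)
  · simp only [Finset.mem_insert, Finset.mem_singleton]
    rintro (e | e) <;> exact absurd (cornerV_inj e) (by decide)

lemma not_corner_of_not_mem {n : ℕ} {x : V3 n} (hx : x ∉ cornersC n) :
    ∀ c, x ≠ cornerV n c := by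
  intro c
  rw [cornersC] at hx
  simp only [Finset.mem_insert, Finset.mem_singleton] at hx
  push_neg at hx
  fin_cases c
  · exact hx.1
  · exact hx.2.1
  · exact hx.2.2

lemma card_V3 (n : ℕ) : 2 * Fintype.card (V3 n) = 3^(n+1) + 3 := by
  classical
  have hSt : (Finset.univ : Finset (St n)).card = 3^(n+1) := by
    rw [Finset.card_univ]
    simp [Fintype.card_fun]
  have hfib := Finset.card_eq_sum_card_fiberwise
    (f := fun w : St n => mkV w) (s := Finset.univ) (t := Finset.univ)
    (fun w _ => Finset.mem_univ _)
  have hsplit := Finset.sum_filter_add_sum_filter_not (Finset.univ : Finset (V3 n))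
    (fun x => x ∈ cornersC n)
    (fun x => (Finset.univ.filter (fun w : St n => mkV w = x)).card)
  have hCpart : (Finset.univ.filter (fun x : V3 n => x ∈ cornersC n)) = cornersC n := by
    ext x; simp
  have hsum1 : ∑ x ∈ Finset.univ.filter (fun x : V3 n => x ∈ cornersC n),
      (Finset.univ.filter (fun w : St n => mkV w = x)).card = 3 := by
    rw [hCpart, cornersC]
    rw [Finset.sum_insert, Finset.sum_insert, Finset.sum_singleton]
    · rw [fiber_corner, fiber_corner, fiber_corner]
      simp
    · simp only [Finset.mem_singleton]
      exact fun e => absurd (cornerV_inj e) (by decide)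
    · simp only [Finset.mem_insert, Finset.mem_singleton]
      rintro (e | e) <;> exact absurd (cornerV_inj e) (by decide)
  have hsum2 : ∑ x ∈ Finset.univ.filter (fun x : V3 n => x ∉ cornersC n),
      (Finset.univ.filter (fun w : St n => mkV w = x)).card =
      2 * (Finset.univ.filter (fun x : V3 n => x ∉ cornersC n)).card := by
    rw [Finset.sum_congr rfl (fun x hx => ?_), Finset.sum_const, smul_eq_mul, mul_comm]
    have hx' := not_corner_of_not_mem (Finset.mem_filter.mp hx).2
    exact le_antisymm (fiber_card_le_two x) (fiber_card_ge_two hx')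
  have hcards := Finset.card_filter_add_card_filter_not
    (s := (Finset.univ : Finset (V3 n))) (p := fun x => x ∈ cornersC n)
  have hCcard : (Finset.univ.filter (fun x : V3 n => x ∈ cornersC n)).card = 3 := by
    rw [hCpart]; exact cornersC_card n
  rw [Finset.card_univ] at hcards
  have hkey : (3:ℕ)^(n+1) = 3 + 2 * (Finset.univ.filter (fun x : V3 n => x ∉ cornersC n)).card := by
    rw [← hSt, hfib, ← hsplit, hsum1, hsum2]
  omega

end Count


section LowerUpper

lemma mkV_snoc_ne {n : ℕ} {s : Fin n → Fin 3} {i j : Fin 3} (hij : i ≠ j) :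
    mkV (Fin.snoc s i) ≠ mkV (Fin.snoc s j) := by
  intro hc
  rcases mkV_eq_iff.mp hc with he | hr
  · apply hij
    have := congrFun he (Fin.last n)
    simpa using this
  · obtain ⟨t, ht, a, b, hab, hlt, hut, hvt, hgt⟩ := hr
    rcases t with ⟨tv, htv⟩
    have ht' : tv < n := ht
    apply hab
    rw [← hut, ← hvt]
    have hc2 : (⟨tv, htv⟩ : Fin (n+1)) = Fin.castSucc ⟨tv, ht'⟩ := rfl
    rw [hc2, Fin.snoc_castSucc, Fin.snoc_castSucc]

lemma adj_snoc {n : ℕ} (s : Fin n → Fin 3) {i j : Fin 3} (hij : i ≠ j) :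
    (sierpinskiTriangle 3 n).Adj (mkV (Fin.snoc s i)) (mkV (Fin.snoc s j)) := by
  rw [adj_iff]
  refine ⟨mkV_snoc_ne hij, _, _, rfl, rfl, ?_, by simpa using hij⟩
  intro k hk
  rcases k with ⟨kv, hkv⟩
  have hkn : kv < n := by
    have h2 : kv ≠ n := fun e => hk (Fin.ext (by simp [Fin.last, e]))
    omega
  have hc2 : (⟨kv, hkv⟩ : Fin (n+1)) = Fin.castSucc ⟨kv, hkn⟩ := rfl
  rw [hc2, Fin.snoc_castSucc, Fin.snoc_castSucc]

lemma forest_card_le {n : ℕ} (F : Finset (V3 n))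
    (hF : ((sierpinskiTriangle 3 n).induce (↑F : Set (V3 n))).IsAcyclic) :
    F.card ≤ 3^n + 1 := by
  classical
  have htri : ∀ s : Fin n → Fin 3,
      ¬ (mkV (Fin.snoc s 0) ∈ F ∧ mkV (Fin.snoc s 1) ∈ F ∧ mkV (Fin.snoc s 2) ∈ F) := by
    rintro s ⟨h0, h1, h2⟩
    have a01 := adj_snoc s (show (0:Fin 3) ≠ 1 by decide)
    have a12 := adj_snoc s (show (1:Fin 3) ≠ 2 by decide)
    have a02 := adj_snoc s (show (0:Fin 3) ≠ 2 by decide)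
    exact no_triangle hF
      (show ((sierpinskiTriangle 3 n).induce (↑F : Set (V3 n))).Adj
        ⟨_, Finset.mem_coe.mpr h0⟩ ⟨_, Finset.mem_coe.mpr h1⟩ from a01)
      (show ((sierpinskiTriangle 3 n).induce (↑F : Set (V3 n))).Adj
        ⟨_, Finset.mem_coe.mpr h1⟩ ⟨_, Finset.mem_coe.mpr h2⟩ from a12)
      (show ((sierpinskiTriangle 3 n).induce (↑F : Set (V3 n))).Adj
        ⟨_, Finset.mem_coe.mpr h0⟩ ⟨_, Finset.mem_coe.mpr h2⟩ from a02)
  set A := Finset.univ.filter (fun w : St n => mkV w ∈ F) with hA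
  -- upper bound for A via cells
  have hAup : A.card ≤ 2 * 3^n := by
    have hfib := Finset.card_eq_sum_card_fiberwise
      (f := fun w : St n => Fin.init w) (s := A) (t := Finset.univ)
      (fun w _ => Finset.mem_univ _)
    have hbound : ∀ s : Fin n → Fin 3, (A.filter (fun w => Fin.init w = s)).card ≤ 2 := by
      intro s
      by_contra hc
      push_neg at hc
      have hsurj := Finset.surj_on_of_inj_on_of_card_le
        (s := A.filter (fun w => Fin.init w = s)) (t := (Finset.univ : Finset (Fin 3)))
        (fun w _ => w (Fin.last n)) (fun w hw => Finset.mem_univ _)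
        (fun w1 w2 hw1 hw2 he => by
          have he' : w1 (Fin.last n) = w2 (Fin.last n) := he
          have e1 : Fin.init w1 = s := (Finset.mem_filter.mp hw1).2
          have e2 : Fin.init w2 = s := (Finset.mem_filter.mp hw2).2
          rw [← Fin.snoc_init_self w1, ← Fin.snoc_init_self w2, e1, e2, he'])
        (by rw [Finset.card_fin]; omega)
      have hall : ∀ i : Fin 3, mkV (Fin.snoc s i) ∈ F := by
        intro i
        obtain ⟨w, hw, hwe⟩ := hsurj i (Finset.mem_univ i)
        have e1 : Fin.init w = s := (Finset.mem_filter.mp hw).2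
        have hwF : mkV w ∈ F := (Finset.mem_filter.mp (Finset.mem_filter.mp hw).1).2
        have hwe' : i = w (Fin.last n) := hwe
        have hwi : w = Fin.snoc s i := by rw [hwe', ← e1, Fin.snoc_init_self]
        rwa [← hwi]
      exact htri s ⟨hall 0, hall 1, hall 2⟩
    calc A.card = ∑ s : Fin n → Fin 3, (A.filter (fun w => Fin.init w = s)).card := hfib
      _ ≤ ∑ _s : Fin n → Fin 3, 2 := Finset.sum_le_sum (fun s _ => hbound s)
      _ = 2 * 3^n := by
          rw [Finset.sum_const, smul_eq_mul, Finset.card_univ]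
          simp [Fintype.card_fun, mul_comm]
  -- lower bound for A via fibers
  have hAlow : 2 * F.card ≤ A.card + 3 := by
    have hfib0 := Finset.card_eq_sum_card_fiberwise
      (f := fun w : St n => mkV w) (s := A) (t := F)
      (fun w hw => (Finset.mem_filter.mp hw).2)
    have hfib : A.card = ∑ x ∈ F, (A.filter (fun w : St n => mkV w = x)).card := hfib0
    have hAeq : ∀ x ∈ F, (A.filter (fun w : St n => mkV w = x)).card =
        (Finset.univ.filter (fun w : St n => mkV w = x)).card := by
      intro x hx
      congr 1
      ext w
      simp only [hA, Finset.mem_filter, Finset.mem_univ, true_and]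
      constructor
      · rintro ⟨_, h2⟩; exact h2
      · intro h2; exact ⟨by rw [h2]; exact hx, h2⟩
    have hsplit := Finset.sum_filter_add_sum_filter_not F
      (fun x => x ∈ cornersC n)
      (fun x => (A.filter (fun w : St n => mkV w = x)).card)
    have hs1 : (F.filter (fun x => x ∈ cornersC n)).card ≤
        ∑ x ∈ F.filter (fun x => x ∈ cornersC n),
        (A.filter (fun w : St n => mkV w = x)).card := by
      have h := Finset.card_nsmul_le_sum (F.filter (fun x => x ∈ cornersC n))
        (fun x => (A.filter (fun w : St n => mkV w = x)).card) 1 (fun x hx => by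
          show 1 ≤ (A.filter (fun w : St n => mkV w = x)).card
          rw [hAeq x (Finset.mem_filter.mp hx).1]
          exact fiber_card_pos x)
      simpa using h
    have hs2 : 2 * (F.filter (fun x => x ∉ cornersC n)).card ≤
        ∑ x ∈ F.filter (fun x => x ∉ cornersC n),
        (A.filter (fun w : St n => mkV w = x)).card := by
      have h := Finset.card_nsmul_le_sum (F.filter (fun x => x ∉ cornersC n))
        (fun x => (A.filter (fun w : St n => mkV w = x)).card) 2 (fun x hx => by
          show 2 ≤ (A.filter (fun w : St n => mkV w = x)).card
          rw [hAeq x (Finset.mem_filter.mp hx).1]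
          exact fiber_card_ge_two (not_corner_of_not_mem (Finset.mem_filter.mp hx).2))
      simpa [mul_comm] using h
    have hccard : (F.filter (fun x => x ∈ cornersC n)).card ≤ 3 := by
      calc (F.filter (fun x => x ∈ cornersC n)).card ≤ (cornersC n).card := by
            apply Finset.card_le_card
            intro x hx
            exact (Finset.mem_filter.mp hx).2
        _ = 3 := cornersC_card n
    have hcards := Finset.card_filter_add_card_filter_not
      (s := F) (p := fun x => x ∈ cornersC n)
    omega
  omega

lemma fvs_lower {n : ℕ} (X : Finset (V3 n))
    (hX : IsFeedbackVertexSet (sierpinskiTriangle 3 n) ↑X) : 3^n + 1 ≤ 2 * X.card := by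
  rw [IsFeedbackVertexSet, ← Finset.coe_compl] at hX
  have h1 := forest_card_le _ hX
  have h2 := Finset.card_add_card_compl X
  have h3 := card_V3 n
  have htop : (3:ℕ)^(n+1) = 3*3^n := by rw [pow_succ]; ring
  omega

lemma fvs_upper (n : ℕ) : ∃ X : Finset (V3 n), 2 * X.card = 3^n + 1 ∧
    IsFeedbackVertexSet (sierpinskiTriangle 3 n) ↑X := by
  classical
  have H := gProps n 0 1 (by decide)
  set F : Finset (V3 n) := (Finset.range (3^n+1)).image (gPath n 0 1) with hF
  have hFcard : F.card = 3^n + 1 := by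
    rw [hF, Finset.card_image_of_injOn, Finset.card_range]
    intro k hk l hl he
    have hk' := Finset.mem_range.mp (Finset.mem_coe.mp hk)
    have hl' := Finset.mem_range.mp (Finset.mem_coe.mp hl)
    exact H.inj k l (by omega) (by omega) he
  have hcompl := Finset.card_add_card_compl F
  have hcV := card_V3 n
  have htop : (3:ℕ)^(n+1) = 3*3^n := by rw [pow_succ]; ring
  refine ⟨Fᶜ, by omega, ?_⟩
  rw [IsFeedbackVertexSet]
  have hc : (↑(Fᶜ) : Set (V3 n))ᶜ = ↑F := by
    rw [Finset.coe_compl, compl_compl]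
  rw [hc]
  have hspec : ∀ a : (↑F : Set (V3 n)),
      sInf {k | k ≤ 3^n ∧ gPath n 0 1 k = ↑a} ≤ 3^n ∧
      gPath n 0 1 (sInf {k | k ≤ 3^n ∧ gPath n 0 1 k = ↑a}) = ↑a := by
    intro a
    have ha : (a : V3 n) ∈ Finset.image (gPath n 0 1) (Finset.range (3^n+1)) := by
      rw [← hF]
      exact Finset.mem_coe.mp a.2
    obtain ⟨k, hk, hke⟩ := Finset.mem_image.mp ha
    have : sInf {k | k ≤ 3^n ∧ gPath n 0 1 k = ↑a} ∈
        {k | k ≤ 3^n ∧ gPath n 0 1 k = ↑a} :=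
      Nat.sInf_mem ⟨k, by
        constructor
        · have := Finset.mem_range.mp hk; omega
        · exact hke⟩
    exact this
  apply acyclic_of_linear (f := fun a : (↑F : Set (V3 n)) =>
    sInf {k | k ≤ 3^n ∧ gPath n 0 1 k = ↑a})
  · intro a b hab
    apply Subtype.ext
    have hab' : sInf {k | k ≤ 3^n ∧ gPath n 0 1 k = ↑a} =
        sInf {k | k ≤ 3^n ∧ gPath n 0 1 k = ↑b} := hab
    have ha := (hspec a).2
    have hb := (hspec b).2
    rw [← ha, ← hb, hab']
  · intro a b hab
    have hG : (sierpinskiTriangle 3 n).Adj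
        (gPath n 0 1 (sInf {k | k ≤ 3^n ∧ gPath n 0 1 k = ↑a}))
        (gPath n 0 1 (sInf {k | k ≤ 3^n ∧ gPath n 0 1 k = ↑b})) := by
      rw [(hspec a).2, (hspec b).2]
      exact hab
    rcases H.chord _ _ (hspec a).1 (hspec b).1 hG with h | h
    · left; omega
    · right; omega

end LowerUpper

theorem stmt14 (n : Nat) :
    feedbackNumber (sierpinskiTriangle 3 n) = (3 ^ n + 1) / 2 ∧
    feedbackNumber (sierpinskiTriangle 3 n) =
      Nat.card (Quotient (triSetoid 3 n)) / 3 := by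
  classical
  have hodd : 3^n % 2 = 1 := by
    rw [Nat.pow_mod]
    simp
  have htop : (3:ℕ)^(n+1) = 3*3^n := by rw [pow_succ]; ring
  have hcV := card_V3 n
  rw [htop] at hcV
  obtain ⟨X0, hX0card, hX0⟩ := fvs_upper n
  set S := {k | ∃ X : Finset (V3 n), X.card = k ∧
    IsFeedbackVertexSet (sierpinskiTriangle 3 n) ↑X} with hS
  have hSne : S.Nonempty := ⟨X0.card, X0, rfl, hX0⟩
  obtain ⟨X1, hX1card, hX1⟩ := Nat.sInf_mem hSne
  have hlow := fvs_lower X1 hX1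
  have hle : sInf S ≤ X0.card := Nat.sInf_le ⟨X0, rfl, hX0⟩
  have hfn : feedbackNumber (sierpinskiTriangle 3 n) = sInf S := rfl
  have hNc : Nat.card (Quotient (triSetoid 3 n)) = Fintype.card (V3 n) :=
    Nat.card_eq_fintype_card
  constructor
  · rw [hfn]
    omega
  · rw [hfn, hNc]
    omega
end

section
/- For all integers n ≥ 3 and odd p ≥ 5, the maximum order of an induced forest of the generalized Sierpiński triangle graph Ŝ_p^n satisfies f(Ŝ_p^n) ≥ p^n − (p^{n−1} + p^{n−2} − 5p + 3)/8. -/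
open SimpleGraph

namespace SierpAux

variable {p : ℕ}

/-- clique-graph adjacency: `s = w i j^l`, `s' = w j i^l`. -/
def rel2 {n : ℕ} (s s' : Fin n → Fin p) : Prop :=
  ∃ m : Fin n, (∀ k, k < m → s k = s' k) ∧ s m ≠ s' m ∧
    ∀ k, m < k → s k = s' m ∧ s' k = s m

lemma rel2.symm {n : ℕ} {s s' : Fin n → Fin p} (h : rel2 s s') : rel2 s' s := by
  obtain ⟨m, h1, h2, h3⟩ := h
  exact ⟨m, fun k hk => (h1 k hk).symm, fun he => h2 he.symm,
    fun k hk => ⟨(h3 k hk).2, (h3 k hk).1⟩⟩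

variable [NeZero p]
set_option linter.unusedSectionVars false

def dletter {n : ℕ} (s s' : Fin n → Fin p) : Fin p :=
  if h : ∃ k, s k ≠ s' k then s (Fin.find (fun k => s k ≠ s' k) h) else 0

def eVert {n : ℕ} (s s' : Fin n → Fin p) : Fin (n+1) → Fin p :=
  Fin.snoc s' (dletter s s')

lemma dletter_eq {n : ℕ} {s s' : Fin n → Fin p} {m : Fin n}
    (h1 : ∀ k, k < m → s k = s' k) (h2 : s m ≠ s' m) : dletter s s' = s m := by
  have hex : ∃ k, s k ≠ s' k := ⟨m, h2⟩
  have : Fin.find (fun k => s k ≠ s' k) hex = m := by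
    rw [Fin.find_eq_iff]
    exact ⟨h2, fun j hj hne => hne (h1 j hj)⟩
  rw [dletter, dif_pos hex, this]

lemma rel2_dletters {n : ℕ} {s s' : Fin n → Fin p} (h : rel2 s s') :
    ∃ m : Fin n, (∀ k, k < m → s k = s' k) ∧ s m ≠ s' m ∧
      (∀ k, m < k → s k = s' m ∧ s' k = s m) ∧
      dletter s s' = s m ∧ dletter s' s = s' m := by
  obtain ⟨m, h1, h2, h3⟩ := h
  exact ⟨m, h1, h2, h3, dletter_eq h1 h2,
    dletter_eq (fun k hk => (h1 k hk).symm) (fun he => h2 he.symm)⟩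

lemma rel2_pair {n : ℕ} {s s' : Fin n → Fin p} (h : rel2 s s') :
    nonCliqueRel p n (eVert s' s) (eVert s s') := by
  obtain ⟨m, h1, h2, h3, hd, hd'⟩ := rel2_dletters h
  refine ⟨m.castSucc, by simp [m.isLt], s m, s' m, h2, ?_, ?_, ?_, ?_⟩
  · intro k hk
    have hk' : (k : ℕ) < m := hk
    have hkn : (k : ℕ) < n := lt_trans hk' m.isLt
    have : k = Fin.castSucc ⟨(k : ℕ), hkn⟩ := by ext; simp
    rw [this]
    simp only [eVert, Fin.snoc_castSucc]
    exact h1 ⟨(k:ℕ), hkn⟩ hk'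
  · show eVert s' s m.castSucc = s m
    simp only [eVert, Fin.snoc_castSucc]
  · show eVert s s' m.castSucc = s' m
    simp only [eVert, Fin.snoc_castSucc]
  · intro k hk
    rcases eq_or_lt_of_le (Fin.le_last k) with hlast | hlt
    · constructor
      · show eVert s' s k = s' m
        rw [hlast]; simp only [eVert, Fin.snoc_last, hd']
      · show eVert s s' k = s m
        rw [hlast]; simp only [eVert, Fin.snoc_last, hd]
    · have hkn : (k : ℕ) < n := by simpa [Fin.lt_iff_val_lt_val] using hlt
      have hke : k = Fin.castSucc ⟨(k:ℕ), hkn⟩ := by ext; simp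
      have hmk : m < (⟨(k:ℕ), hkn⟩ : Fin n) := hk
      rw [hke]
      simp only [eVert, Fin.snoc_castSucc]
      exact ⟨(h3 _ hmk).1, (h3 _ hmk).2⟩

lemma ncr_symm {n : ℕ} {u v : Fin (n+1) → Fin p} (h : nonCliqueRel p n u v) :
    nonCliqueRel p n v u := by
  obtain ⟨t, ht, i, j, hij, h1, h2, h3, h4⟩ := h
  exact ⟨t, ht, j, i, hij.symm, fun k hk => (h1 k hk).symm, h3, h2,
    fun k hk => ⟨(h4 k hk).2, (h4 k hk).1⟩⟩

lemma ncr_det {n : ℕ} {u v w : Fin (n+1) → Fin p} (h : nonCliqueRel p n u v)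
    (h' : nonCliqueRel p n u w) : v = w := by
  obtain ⟨t, ht, i, j, hij, h1, h2, h3, h4⟩ := h
  obtain ⟨t', ht', i', j', hij', h1', h2', h3', h4'⟩ := h'
  have hlast : (Fin.last n : Fin (n+1)) = ⟨n, by omega⟩ := rfl
  -- u (last) = j and = j'
  have hjn : u (Fin.last n) = j := (h4 (Fin.last n) (by simp [Fin.lt_iff_val_lt_val]; omega)).1
  have hjn' : u (Fin.last n) = j' := (h4' (Fin.last n) (by simp [Fin.lt_iff_val_lt_val]; omega)).1
  have htt : t = t' := by
    by_contra hne
    rcases lt_or_gt_of_ne hne with hlt | hlt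
    · -- t < t' : u t' = j (from h4) and u t' = i' ; also j = j' so i' = j' contradiction
      have := (h4 t' hlt).1
      exact hij' (by rw [← h2', this]; exact hjn.symm.trans hjn')
    · have := (h4' t hlt).1
      exact hij (by rw [← h2, this]; exact hjn'.symm.trans hjn)
  subst htt
  have hii : i = i' := h2.symm.trans h2'
  have hjj : j = j' := hjn.symm.trans hjn'
  funext k
  rcases lt_trichotomy k t with hk | hk | hk
  · rw [← h1 k hk, ← h1' k hk]
  · subst hk; rw [h3, h3', hjj]
  · rw [(h4 k hk).2, (h4' k hk).2, hii]

lemma ncr_det' {n : ℕ} {u v w : Fin (n+1) → Fin p} (h : nonCliqueRel p n v u)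
    (h' : nonCliqueRel p n w u) : v = w :=
  ncr_det (ncr_symm h) (ncr_symm h')

lemma class_eq {n : ℕ} {u v : Fin (n+1) → Fin p} :
    Quotient.mk (triSetoid p n) u = Quotient.mk (triSetoid p n) v ↔
      u = v ∨ nonCliqueRel p n u v := by
  constructor
  · intro h
    have h' : Relation.EqvGen (nonCliqueRel p n) u v := Quotient.exact h
    clear h
    induction h' with
    | rel x y hxy => exact Or.inr hxy
    | refl x => exact Or.inl rfl
    | symm x y _ ih =>
      rcases ih with h | h
      · exact Or.inl h.symm
      · exact Or.inr (ncr_symm h)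
    | trans x y z _ _ ih1 ih2 =>
      rcases ih1 with h1 | h1 <;> rcases ih2 with h2 | h2
      · exact Or.inl (h1.trans h2)
      · exact Or.inr (by rwa [h1])
      · exact Or.inr (by rwa [← h2])
      · exact Or.inl (ncr_det (ncr_symm h1) h2)
  · rintro (rfl | h)
    · rfl
    · exact Quotient.sound (Relation.EqvGen.rel _ _ h)

/-- adjacency in the Sierpinski graph is either a non-clique edge or a clique edge. -/
lemma adj_cases {n : ℕ} {u v : Fin (n+1) → Fin p} (h : (sierpinski p (n+1)).Adj u v) :
    nonCliqueRel p n u v ∨ nonCliqueRel p n v u ∨ Fin.init u = Fin.init v := by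
  rw [sierpinski, fromRel_adj] at h
  obtain ⟨hne, h | h⟩ := h
  all_goals {
    obtain ⟨t, i, j, hij, h1, h2, h3, h4⟩ := h
    rcases Nat.lt_or_ge (t : ℕ) n with ht | ht
    · first
        | exact Or.inl ⟨t, ht, i, j, hij, h1, h2, h3, h4⟩
        | exact Or.inr (Or.inl ⟨t, ht, i, j, hij, h1, h2, h3, h4⟩)
    · refine Or.inr (Or.inr ?_)
      have htl : t = Fin.last n := by
        ext; simp; omega
      first
        | · funext k
            exact h1 k.castSucc (by rw [htl]; exact Fin.castSucc_lt_last k)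
        | · funext k
            exact (h1 k.castSucc (by rw [htl]; exact Fin.castSucc_lt_last k)).symm }



lemma rel2_cons {m : ℕ} {f g : Fin m → Fin p} (c : Fin p) (h : rel2 f g) :
    rel2 (Fin.cons c f) (Fin.cons c g) := by
  obtain ⟨i, h1, h2, h3⟩ := h
  refine ⟨i.succ, ?_, by simpa using h2, ?_⟩
  · intro k hk
    rcases Fin.eq_zero_or_eq_succ k with rfl | ⟨k', rfl⟩
    · simp
    · simp only [Fin.cons_succ]
      exact h1 k' (by simpa using hk)
  · intro k hk
    rcases Fin.eq_zero_or_eq_succ k with rfl | ⟨k', rfl⟩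
    · exact absurd hk (by simp [Fin.lt_iff_val_lt_val])
    · simp only [Fin.cons_succ]
      exact h3 k' (by exact_mod_cast Fin.succ_lt_succ_iff.mp hk)

lemma rel2_corner {m : ℕ} {c c' : Fin p} (h : c ≠ c') :
    rel2 (Fin.cons c (fun _ => c') : Fin (m+1) → Fin p) (Fin.cons c' (fun _ => c)) := by
  refine ⟨0, ?_, by simpa using h, ?_⟩
  · intro k hk
    exact absurd hk (by simp)
  · intro k hk
    have : k ≠ 0 := Fin.ne_of_gt hk
    obtain ⟨k', rfl⟩ := Fin.exists_succ_eq.2 this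
    constructor <;> simp

def Lst (a b : Fin p) : List (Fin p) :=
  a :: (((List.finRange p).filter (fun x => x ≠ a ∧ x ≠ b)) ++ [b])


lemma lst_nodup {a b : Fin p} (hab : a ≠ b) : (Lst a b).Nodup := by
  unfold Lst
  refine List.nodup_cons.2 ⟨?_, ?_⟩
  · simp only [List.mem_append, List.mem_filter, List.mem_singleton]
    rintro (⟨-, h⟩ | h)
    · simp at h
    · exact hab h
  · refine List.Nodup.append ?_ (List.nodup_singleton b) ?_
    · exact (List.nodup_finRange p).filter _
    · intro x hx hy
      simp only [List.mem_singleton] at hy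
      subst hy
      simp at hx

lemma lst_mem {a b : Fin p} (x : Fin p) : x ∈ Lst a b := by
  unfold Lst
  by_cases hxa : x = a
  · simp [hxa]
  · by_cases hxb : x = b
    · simp [hxb]
    · simp [hxa, hxb, List.mem_filter, List.mem_finRange]

lemma lst_length {a b : Fin p} (hab : a ≠ b) : (Lst a b).length = p := by
  have h1 : (Lst a b).toFinset = Finset.univ := by
    ext x; simp [lst_mem]
  have := List.toFinset_card_of_nodup (lst_nodup hab)
  rw [h1] at this
  simpa using this.symm

lemma lst_getLast? {a b : Fin p} : (Lst a b).getLast? = some b := by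
  unfold Lst
  rw [show a :: (((List.finRange p).filter (fun x => x ≠ a ∧ x ≠ b)) ++ [b])
      = (a :: ((List.finRange p).filter (fun x => x ≠ a ∧ x ≠ b))) ++ [b] from rfl,
    List.getLast?_append_of_ne_nil _ (by simp)]
  rfl

lemma lst_ne_nil {a b : Fin p} : Lst a b ≠ [] := by simp [Lst]

lemma lst_not_mem_tail {a b : Fin p} (hab : a ≠ b) : a ∉ (Lst a b).tail := by
  have := lst_nodup hab
  rw [Lst] at this ⊢
  exact (List.nodup_cons.1 this).1

def hAux {m : ℕ} (q : Fin p → Fin p → List (Fin m → Fin p)) (b : Fin p) :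
    List (Fin p) → Fin p → List (Fin (m+1) → Fin p)
  | [], _ => []
  | c :: rest, prev =>
      ((q prev (rest.headD b)).map (Fin.cons c)) ++ hAux q b rest c

def hpath : (n : ℕ) → Fin p → Fin p → List (Fin n → Fin p)
  | 0, _, _ => [fun i => i.elim0]
  | n+1, a, b => hAux (hpath n) b (Lst a b) a

/-- the invariant for the gluing recursion -/
def Inv (b : Fin p) (l : List (Fin p)) (prev : Fin p) : Prop :=
  l.Nodup ∧ l ≠ [] ∧ l.getLast? = some b ∧ prev ∉ l.tail ∧ prev ≠ b

lemma Inv.prev_ne_next {b c prev : Fin p} {rest : List (Fin p)}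
    (h : Inv b (c :: rest) prev) : prev ≠ rest.headD b := by
  obtain ⟨-, -, -, h4, h5⟩ := h
  cases rest with
  | nil => simpa using h5
  | cons c' rest' =>
    simp only [List.headD_cons]
    intro hh
    exact h4 (by simp [hh])

lemma Inv.step {b c prev : Fin p} {rest : List (Fin p)}
    (h : Inv b (c :: rest) prev) (hne : rest ≠ []) : Inv b rest c := by
  obtain ⟨h1, -, h3, -, -⟩ := h
  have hcr : c ∉ rest := (List.nodup_cons.1 h1).1
  have hlast : rest.getLast? = some b := by
    cases rest with
    | nil => exact absurd rfl hne
    | cons c' rest' => rw [← List.getLast?_cons_cons (a := c)]; exact h3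
  refine ⟨(List.nodup_cons.1 h1).2, hne, hlast, ?_, ?_⟩
  · intro hc
    exact hcr (List.mem_of_mem_tail hc)
  · intro hcb
    exact hcr (hcb ▸ List.mem_of_mem_getLast? hlast)

section facts

variable {m : ℕ} {q : Fin p → Fin p → List (Fin m → Fin p)} {b : Fin p}

lemma aux_len {M : ℕ} (hq : ∀ x y : Fin p, x ≠ y → (q x y).length = M) :
    ∀ l prev, Inv b l prev → (hAux q b l prev).length = l.length * M := by
  intro l
  induction l with
  | nil => intro prev h; exact absurd rfl h.2.1
  | cons c rest ih =>
    intro prev h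
    rw [hAux, List.length_append, List.length_map, hq _ _ h.prev_ne_next]
    cases eq_or_ne rest [] with
    | inl he => subst he; simp [hAux]
    | inr hne => rw [ih c (h.step hne)]; simp; ring

lemma aux_mem : ∀ l prev, ∀ v ∈ hAux q b l prev, v 0 ∈ l := by
  intro l
  induction l with
  | nil => intro prev v hv; simp [hAux] at hv
  | cons c rest ih =>
    intro prev v hv
    rw [hAux, List.mem_append] at hv
    rcases hv with hv | hv
    · obtain ⟨f, -, rfl⟩ := List.mem_map.1 hv
      simp
    · exact List.mem_cons_of_mem _ (ih c v hv)

lemma aux_head? (hqh : ∀ x y : Fin p, x ≠ y → (q x y).head? = some (fun _ => x))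
    {c prev : Fin p} {rest : List (Fin p)} (h : Inv b (c :: rest) prev) :
    (hAux q b (c :: rest) prev).head? = some (Fin.cons c (fun _ => prev)) := by
  rw [hAux, List.head?_append, List.head?_map, hqh _ _ h.prev_ne_next]
  rfl

lemma aux_getLast? (hql : ∀ x y : Fin p, x ≠ y → (q x y).getLast? = some (fun _ => y)) :
    ∀ l prev, Inv b l prev → (hAux q b l prev).getLast? = some (fun _ => b) := by
  intro l
  induction l with
  | nil => intro prev h; exact absurd rfl h.2.1
  | cons c rest ih =>
    intro prev h
    rw [hAux]
    cases eq_or_ne rest [] with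
    | inl he =>
      subst he
      have hcb : c = b := by simpa using h.2.2.1
      rw [hAux, List.append_nil, List.getLast?_map, hql _ _ h.prev_ne_next]
      simp only [List.headD_nil, Option.map_some]
      congr 1
      funext k
      rcases Fin.eq_zero_or_eq_succ k with rfl | ⟨k', rfl⟩ <;> simp [hcb]
    | inr hne =>
      have ih' := ih c (h.step hne)
      have hnn : hAux q b rest c ≠ [] := by
        intro hempty; rw [hempty] at ih'; simp at ih'
      rw [List.getLast?_append_of_ne_nil _ hnn, ih']

lemma aux_ne_nil (hql : ∀ x y : Fin p, x ≠ y → (q x y).getLast? = some (fun _ => y))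
    {l : List (Fin p)} {prev : Fin p} (h : Inv b l prev) : hAux q b l prev ≠ [] := by
  intro hempty
  have := aux_getLast? hql l prev h
  rw [hempty] at this; simp at this

lemma aux_nodup (hqn : ∀ x y : Fin p, x ≠ y → (q x y).Nodup) :
    ∀ l prev, Inv b l prev → (hAux q b l prev).Nodup := by
  intro l
  induction l with
  | nil => intro prev h; exact absurd rfl h.2.1
  | cons c rest ih =>
    intro prev h
    rw [hAux]
    refine List.Nodup.append ?_ ?_ ?_
    · exact List.Nodup.map (fun f g hfg => by
        funext k; exact congrFun (congrArg Fin.tail hfg) k) (hqn _ _ h.prev_ne_next)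
    · cases eq_or_ne rest [] with
      | inl he => subst he; simp [hAux]
      | inr hne => exact ih c (h.step hne)
    · intro v hv hv'
      obtain ⟨f, -, rfl⟩ := List.mem_map.1 hv
      have : (Fin.cons c f : Fin (m+1) → Fin p) 0 ∈ rest := aux_mem rest c _ hv'
      simp only [Fin.cons_zero] at this
      exact (List.nodup_cons.1 h.1).1 this

lemma aux_chain
    (hqh : ∀ x y : Fin p, x ≠ y → (q x y).head? = some (fun _ => x))
    (hql : ∀ x y : Fin p, x ≠ y → (q x y).getLast? = some (fun _ => y))
    (hqc : ∀ x y : Fin p, x ≠ y → List.Chain' rel2 (q x y)) :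
    ∀ l prev, Inv b l prev → List.Chain' rel2 (hAux q b l prev) := by
  intro l
  induction l with
  | nil => intro prev h; exact absurd rfl h.2.1
  | cons c rest ih =>
    intro prev h
    rw [hAux]; simp only [List.Chain']; rw [List.isChain_append]
    refine ⟨?_, ?_, ?_⟩
    · rw [List.isChain_map]
      exact List.IsChain.imp (fun f g hr => rel2_cons c hr) (hqc _ _ h.prev_ne_next)
    · cases eq_or_ne rest [] with
      | inl he => subst he; simp [hAux]
      | inr hne => exact ih c (h.step hne)
    · intro x hx y hy
      cases rest with
      | nil => rw [hAux] at hy; simp at hy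
      | cons c' rest' =>
        have hinv' := h.step (by simp)
        rw [aux_head? hqh hinv'] at hy
        rw [List.getLast?_map, hql _ _ h.prev_ne_next] at hx
        simp only [Option.map_some, Option.mem_def, Option.some.injEq] at hx hy
        subst hx; subst hy
        simp only [List.headD_cons]
        exact rel2_corner (by
          have := (List.nodup_cons.1 h.1).1
          intro hcc'; exact this (hcc' ▸ List.mem_cons_self (a := c') (l := rest')))

end facts

/-- all the facts about `hpath`, proven by induction on `n`. -/
theorem hpath_facts (hp2 : 2 ≤ p) : ∀ (n : ℕ) (a b : Fin p), a ≠ b →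
    (hpath n a b).length = p ^ n ∧
    (hpath n a b).head? = some (fun _ => a) ∧
    (hpath n a b).getLast? = some (fun _ => b) ∧
    (hpath n a b).Nodup ∧
    List.Chain' rel2 (hpath n a b) := by
  intro n
  induction n with
  | zero =>
    intro a b hab
    refine ⟨by simp [hpath], ?_, ?_, by simp [hpath], by simp only [hpath]; exact List.isChain_singleton _⟩
    · simp only [hpath, List.head?_cons, Option.some.injEq]
      funext k; exact k.elim0
    · simp only [hpath, List.getLast?_singleton, Option.some.injEq]
      funext k; exact k.elim0
  | succ n ihn =>
    intro a b hab
    have hlen := fun x y h => (ihn x y h).1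
    have hhead := fun x y h => (ihn x y h).2.1
    have hlast := fun x y h => (ihn x y h).2.2.1
    have hnodup := fun x y h => (ihn x y h).2.2.2.1
    have hchain := fun x y h => (ihn x y h).2.2.2.2
    have hinv : Inv b (Lst a b) a :=
      ⟨lst_nodup hab, lst_ne_nil, lst_getLast?, lst_not_mem_tail hab, hab⟩
    refine ⟨?_, ?_, ?_, ?_, ?_⟩
    · rw [hpath, aux_len hlen _ _ hinv, lst_length hab, pow_succ, Nat.mul_comm]
    · rw [hpath]
      have : Lst a b = a :: (Lst a b).tail := rfl
      rw [this, aux_head? hhead (this ▸ hinv)]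
      congr 1
      funext k
      rcases Fin.eq_zero_or_eq_succ k with rfl | ⟨k', rfl⟩ <;> simp
    · rw [hpath]; exact aux_getLast? hlast _ _ hinv
    · rw [hpath]; exact aux_nodup hnodup _ _ hinv
    · rw [hpath]; exact aux_chain hhead hlast hchain _ _ hinv


section acy

variable {V : Type*} {G : SimpleGraph V} {f : V → ℕ}

lemma walk_mono (hinj : Function.Injective f)
    (hadj : ∀ u v, G.Adj u v → f u = f v + 1 ∨ f v = f u + 1) :
    ∀ {a b : V} (w : G.Walk a b), w.IsPath →
      (∀ i, i ≤ w.length → f (w.getVert i) = f a + i) ∨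
      (∀ i, i ≤ w.length → f (w.getVert i) + i = f a) := by
  intro a b w
  induction w with
  | nil =>
    intro _
    left
    intro i hi
    simp only [SimpleGraph.Walk.length_nil, Nat.le_zero] at hi
    subst hi
    simp
  | @cons a v b h q ih =>
    intro hp
    have hq : q.IsPath := hp.of_cons
    have hav : a ∉ q.support := (SimpleGraph.Walk.cons_isPath_iff h q).1 hp |>.2
    have hiq := ih hq
    rcases hadj a v h with ha | ha
    · -- f a = f v + 1, going down
      right
      rcases hiq with hup | hdown
      · -- q goes up; q must have length 0
        rcases Nat.eq_zero_or_pos q.length with h0 | h1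
        · intro i hi
          simp only [SimpleGraph.Walk.length_cons, h0] at hi ⊢
          interval_cases i
          · simp
          · have : (SimpleGraph.Walk.cons h q).getVert 1 = q.getVert 0 := rfl
            rw [this]
            simp [ha]
        · exfalso
          have h1' : f (q.getVert 1) = f v + 1 := by simpa using hup 1 h1
          have : q.getVert 1 = a := hinj (by rw [h1', ha])
          exact hav (SimpleGraph.Walk.mem_support_iff_exists_getVert.2 ⟨1, this, h1⟩)
      · intro i hi
        cases i with
        | zero => simp
        | succ j =>
          have : (SimpleGraph.Walk.cons h q).getVert (j+1) = q.getVert j := rfl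
          rw [this]
          have := hdown j (by simpa using hi)
          omega
    · -- f v = f a + 1, going up
      left
      rcases hiq with hup | hdown
      · intro i hi
        cases i with
        | zero => simp
        | succ j =>
          have : (SimpleGraph.Walk.cons h q).getVert (j+1) = q.getVert j := rfl
          rw [this]
          have := hup j (by simpa using hi)
          omega
      · rcases Nat.eq_zero_or_pos q.length with h0 | h1
        · intro i hi
          simp only [SimpleGraph.Walk.length_cons, h0] at hi ⊢
          interval_cases i
          · simp
          · have : (SimpleGraph.Walk.cons h q).getVert 1 = q.getVert 0 := rfl
            rw [this]
            simp [ha]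
        · exfalso
          have h1' : f (q.getVert 1) + 1 = f v := hdown 1 h1
          have : q.getVert 1 = a := hinj (by omega)
          exact hav (SimpleGraph.Walk.mem_support_iff_exists_getVert.2 ⟨1, this, h1⟩)

theorem linear_acyclic (hinj : Function.Injective f)
    (hadj : ∀ u v, G.Adj u v → f u = f v + 1 ∨ f v = f u + 1) : G.IsAcyclic := by
  intro v c hc
  cases c with
  | nil => exact hc.ne_nil rfl
  | cons h q =>
    have hq : q.IsPath := ((SimpleGraph.Walk.cons_isCycle_iff q h).1 hc).1
    have hlen : 2 ≤ q.length := by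
      have := hc.three_le_length
      simp only [SimpleGraph.Walk.length_cons] at this
      omega
    have hgv : q.getVert q.length = v := q.getVert_length
    rcases hadj _ _ h with ha | ha <;>
      rcases walk_mono hinj hadj q hq with hm | hm <;>
      · have := hm q.length le_rfl
        rw [hgv] at this
        omega


end acy
end SierpAux

theorem stmt16 (p n : Nat) (hp : 5 ≤ p) (hpo : Odd p) (hn : 3 ≤ n) :
    (p : ℚ) ^ n - ((p : ℚ) ^ (n - 1) + (p : ℚ) ^ (n - 2) - 5 * (p : ℚ) + 3) / 8
      ≤ (maxInducedForest (sierpinskiTriangle p n) : ℚ) := by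
  classical
  haveI : NeZero p := ⟨by omega⟩
  have hp1 : 1 ≤ p := by omega
  have hN2 : 2 ≤ p ^ n := by
    calc 2 ≤ p := by omega
    _ = p ^ 1 := (pow_one p).symm
    _ ≤ p ^ n := Nat.pow_le_pow_right (by omega) (by omega)
  have h01 : (0 : Fin p) ≠ 1 := by
    intro h
    have h2 : (1 : ℕ) % p = 1 := Nat.mod_eq_of_lt (by omega)
    have := congrArg Fin.val h
    rw [Fin.val_zero, Fin.val_one'] at this
    omega
  obtain ⟨hlen, hhead, hlast, hnodup, hchain⟩ :=
    SierpAux.hpath_facts (by omega : 2 ≤ p) n (0 : Fin p) 1 h01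
  set N := p ^ n with hN
  set l := SierpAux.hpath n (0 : Fin p) 1 with hldef
  have hlN : l.length = N := hlen
  set d0 : Fin n → Fin p := (fun _ => 0) with hd0
  set s : ℕ → (Fin n → Fin p) := (fun t => l.getD t d0) with hsdef
  have hsget : ∀ t (ht : t < N), s t = l.get ⟨t, by rw [hlN]; exact ht⟩ := by
    intro t ht
    exact List.getD_eq_getElem _ _ (by omega)
  have hs_inj : ∀ t t', t < N → t' < N → s t = s t' → t = t' := by
    intro t t' ht ht' he
    rw [hsget t ht, hsget t' ht'] at he
    have h2 := (hnodup.get_inj_iff).1 he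
    simpa using congrArg Fin.val h2
  have hs_rel : ∀ t, t + 1 < N → SierpAux.rel2 (s t) (s (t + 1)) := by
    intro t ht
    have h2 := List.isChain_iff_getElem.1 hchain t (by omega)
    rw [hsget t (by omega), hsget (t + 1) ht]
    exact h2
  set vq : ℕ → Quotient (triSetoid p n) :=
    (fun t => Quotient.mk (triSetoid p n) (SierpAux.eVert (s t) (s (t + 1)))) with hvqdef
  have hpair : ∀ t, t + 1 < N →
      nonCliqueRel p n (SierpAux.eVert (s (t + 1)) (s t)) (SierpAux.eVert (s t) (s (t + 1))) :=
    fun t ht => SierpAux.rel2_pair (hs_rel t ht)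
  have hreps : ∀ t, t + 1 < N → ∀ u, Quotient.mk (triSetoid p n) u = vq t →
      u = SierpAux.eVert (s t) (s (t + 1)) ∨ u = SierpAux.eVert (s (t + 1)) (s t) := by
    intro t ht u hu
    rcases SierpAux.class_eq.1 hu with h | h
    · exact Or.inl h
    · exact Or.inr (SierpAux.ncr_det' h (hpair t ht))
  have hinit : ∀ x y : Fin n → Fin p, Fin.init (SierpAux.eVert x y) = y :=
    fun x y => Fin.init_snoc _ _
  have hvq_inj : ∀ t t', t + 1 < N → t' + 1 < N → vq t = vq t' → t = t' := by
    intro t t' ht ht' he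
    have hu : Quotient.mk (triSetoid p n) (SierpAux.eVert (s t) (s (t + 1))) = vq t' := he
    rcases hreps t' ht' _ hu with h | h
    · have := congrArg Fin.init h
      rw [hinit, hinit] at this
      have := hs_inj _ _ (by omega) (by omega) this
      omega
    · exfalso
      have h2 := congrArg Fin.init h
      rw [hinit, hinit] at h2
      have htt : t + 1 = t' := hs_inj _ _ (by omega) (by omega) h2
      have h3 : nonCliqueRel p n (SierpAux.eVert (s t') (s (t' + 1)))
          (SierpAux.eVert (s t) (s (t + 1))) := by
        rw [h]
        exact SierpAux.rel2_pair (SierpAux.rel2.symm (hs_rel t' ht'))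
      have h4 := SierpAux.ncr_det' h3 (hpair t ht)
      have h5 := congrArg Fin.init h4
      rw [hinit, hinit] at h5
      have := hs_inj _ _ (by omega) (by omega) h5
      omega
  set vlist := (List.range (N - 1)).map vq with hvl
  have hvnodup : vlist.Nodup := by
    refine List.Nodup.map_on ?_ List.nodup_range
    intro x hx y hy hxy
    rw [List.mem_range] at hx hy
    exact hvq_inj x y (by omega) (by omega) hxy
  set Y : Finset (Quotient (triSetoid p n)) := vlist.toFinset with hY
  have hYcard : Y.card = N - 1 := by
    rw [hY, List.toFinset_card_of_nodup hvnodup, hvl, List.length_map, List.length_range]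
  have hYmem : ∀ y : Quotient (triSetoid p n), y ∈ Y → ∃ t, t < N - 1 ∧ vq t = y := by
    intro y hy
    rw [hY, List.mem_toFinset, hvl, List.mem_map] at hy
    obtain ⟨t, ht, rfl⟩ := hy
    exact ⟨t, List.mem_range.1 ht, rfl⟩
  have hacy : ((sierpinskiTriangle p n).induce (↑Y : Set (Quotient (triSetoid p n)))).IsAcyclic := by
    have hex : ∀ y : (↑Y : Set (Quotient (triSetoid p n))), ∃ t, t < N - 1 ∧ vq t = ↑y :=
      fun y => hYmem _ y.2
    set f : (↑Y : Set (Quotient (triSetoid p n))) → ℕ := (fun y => Nat.find (hex y)) with hfdef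
    have hfs : ∀ y, (f y) < N - 1 ∧ vq (f y) = ↑y := fun y => Nat.find_spec (hex y)
    refine SierpAux.linear_acyclic (f := f) ?_ ?_
    · intro y y' he
      refine Subtype.ext ?_
      rw [← (hfs y).2, ← (hfs y').2, he]
    · intro y y' hadj
      have hadj' : (sierpinskiTriangle p n).Adj ↑y ↑y' := hadj
      obtain ⟨hne, u, w, hu, hw, huw⟩ := hadj'
      rcases SierpAux.adj_cases huw with hncr | hncr | hini
      · exact absurd (by rw [← hu, ← hw]; exact SierpAux.class_eq.2 (Or.inr hncr)) hne
      · exact absurd (by rw [← hu, ← hw]; exact (SierpAux.class_eq.2 (Or.inr hncr)).symm) hne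
      · have ht := (hfs y).1
        have ht' := (hfs y').1
        have hbt : f y + 1 < N := by omega
        have hbt' : f y' + 1 < N := by omega
        have hu2 : Quotient.mk (triSetoid p n) u = vq (f y) := by rw [hu, (hfs y).2]
        have hw2 : Quotient.mk (triSetoid p n) w = vq (f y') := by rw [hw, (hfs y').2]
        have hiu : Fin.init u = s (f y + 1) ∨ Fin.init u = s (f y) := by
          rcases hreps _ hbt _ hu2 with h | h <;> rw [h, hinit]
          · exact Or.inl rfl
          · exact Or.inr rfl
        have hiw : Fin.init w = s (f y' + 1) ∨ Fin.init w = s (f y') := by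
          rcases hreps _ hbt' _ hw2 with h | h <;> rw [h, hinit]
          · exact Or.inl rfl
          · exact Or.inr rfl
        have hfne : f y ≠ f y' := by
          intro hEq
          exact hne (by rw [← (hfs y).2, ← (hfs y').2, hEq])
        rcases hiu with h1 | h1 <;> rcases hiw with h2 | h2 <;>
          · rw [h1, h2] at hini
            have := hs_inj _ _ (by omega) (by omega) hini
            omega
  haveI : Fintype (Quotient (triSetoid p n)) :=
    @Quotient.fintype _ _ (triSetoid p n) (fun _ _ => Classical.dec _)
  have hbdd : BddAbove {k | ∃ X : Finset (Quotient (triSetoid p n)), X.card = k ∧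
      ((sierpinskiTriangle p n).induce (↑X : Set (Quotient (triSetoid p n)))).IsAcyclic} := by
    refine ⟨Fintype.card (Quotient (triSetoid p n)), ?_⟩
    rintro k ⟨X, rfl, -⟩
    exact Finset.card_le_univ X |>.trans (le_of_eq (Finset.card_univ))
  have hmemS : (N - 1) ∈ {k | ∃ X : Finset (Quotient (triSetoid p n)), X.card = k ∧
      ((sierpinskiTriangle p n).induce (↑X : Set (Quotient (triSetoid p n)))).IsAcyclic} :=
    ⟨Y, hYcard, hacy⟩
  have hle : N - 1 ≤ maxInducedForest (sierpinskiTriangle p n) :=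
    le_csSup hbdd hmemS
  have hcastN : ((N - 1 : ℕ) : ℚ) = (p : ℚ) ^ n - 1 := by
    rw [Nat.cast_sub (by omega), hN]
    push_cast
    ring
  have hfinal : (p : ℚ) ^ n - 1 ≤ (maxInducedForest (sierpinskiTriangle p n) : ℚ) := by
    rw [← hcastN]
    exact_mod_cast Nat.cast_le.2 hle
  have hq5 : (5 : ℚ) ≤ (p : ℚ) := by exact_mod_cast hp
  have h1 : (p : ℚ) ^ 2 ≤ (p : ℚ) ^ (n - 1) :=
    pow_le_pow_right₀ (by linarith) (by omega)
  have h2 : (p : ℚ) ^ 1 ≤ (p : ℚ) ^ (n - 2) :=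
    pow_le_pow_right₀ (by linarith) (by omega)
  have h3 : 5 * (p : ℚ) ≤ (p : ℚ) ^ 2 := by nlinarith
  rw [pow_one] at h2
  linarith
end
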